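/- arXiv:1210.2443 — 6 statements merged into one kernel-verified Lean document; each statement's English description precedes it below -/
import Mathlib

section
/- Let b > 0, γ > 0, and for a continuous drift b^R : ℝ → ℝ with antiderivative-based scale function u_R(x) = ∫_{z₀}^x exp(−∫_{z₀}^y 2 b^R(r) dr) dy, suppose b^R ≥ 0 on ℝ. Then the function H(s) = c·u_R'(s−γ) / (u_R(s−γ) + c·u_R'(s−γ)), where c = (1 − exp(−2bγ))/(2b) > 0, is non-increasing on (z₀ + γ, ∞). -/
open Real intervalIntegral

/-- If the recurrent drift `b^R` is nonnegative, then the function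
`H(s) = c u_R'(s−γ) / (u_R(s−γ) + c u_R'(s−γ))`, with `c = (1 − e^{−2bγ})/(2b)`,
is non-increasing on `(z₀ + γ, ∞)`. -/
theorem stmt_1 (b γ z₀ : ℝ) (hb : 0 < b) (hγ : 0 < γ)
    (bR : ℝ → ℝ) (hbRcont : Continuous bR) (hbRnonneg : ∀ x, 0 ≤ bR x)
    (uR uR' H : ℝ → ℝ)
    (huR' : ∀ x, uR' x = Real.exp (-(∫ r in z₀..x, 2 * bR r)))
    (huR : ∀ x, uR x = ∫ y in z₀..x, uR' y)
    (c : ℝ) (hc : c = (1 - Real.exp (-(2 * b * γ))) / (2 * b))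
    (hH : ∀ s, H s = c * uR' (s - γ) / (uR (s - γ) + c * uR' (s - γ))) :
    AntitoneOn H (Set.Ioi (z₀ + γ)) := by
  have hcont2 : Continuous (fun r => 2 * bR r) := by continuity
  have hInt : ∀ a d : ℝ, IntervalIntegrable (fun r => 2 * bR r) MeasureTheory.volume a d :=
    fun a d => hcont2.intervalIntegrable a d
  -- c > 0
  have hcpos : 0 < c := by
    rw [hc]
    apply div_pos _ (by linarith)
    have : Real.exp (-(2 * b * γ)) < 1 := by
      rw [Real.exp_lt_one_iff]
      nlinarith
    linarith
  -- uR' positive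
  have huR'pos : ∀ x, 0 < uR' x := fun x => by rw [huR']; exact Real.exp_pos _
  -- uR' antitone
  have huR'anti : ∀ x y : ℝ, x ≤ y → uR' y ≤ uR' x := by
    intro x y hxy
    rw [huR', huR']
    apply Real.exp_le_exp.2
    have hsplit : (∫ r in z₀..x, 2 * bR r) + (∫ r in x..y, 2 * bR r)
        = ∫ r in z₀..y, 2 * bR r :=
      intervalIntegral.integral_add_adjacent_intervals (hInt z₀ x) (hInt x y)
    have hnn : 0 ≤ ∫ r in x..y, 2 * bR r :=
      intervalIntegral.integral_nonneg hxy (fun r _ => by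
        have := hbRnonneg r; linarith)
    linarith
  -- uR' continuous, hence interval integrable
  have huR'cont : Continuous uR' := by
    have hprim : Continuous (fun x => ∫ r in z₀..x, 2 * bR r) :=
      intervalIntegral.continuous_primitive hInt z₀
    have : Continuous (fun x => Real.exp (-(∫ r in z₀..x, 2 * bR r))) :=
      Real.continuous_exp.comp hprim.neg
    exact (funext huR' : uR' = _) ▸ this
  have hIntu : ∀ a d : ℝ, IntervalIntegrable uR' MeasureTheory.volume a d :=
    fun a d => huR'cont.intervalIntegrable a d
  -- uR nonneg for x ≥ z₀ and monotone
  have huRnn : ∀ x, z₀ ≤ x → 0 ≤ uR x := by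
    intro x hx
    rw [huR]
    exact intervalIntegral.integral_nonneg hx (fun r _ => (huR'pos r).le)
  have huRmono : ∀ x y : ℝ, x ≤ y → uR x ≤ uR y := by
    intro x y hxy
    rw [huR, huR]
    have hsplit : (∫ r in z₀..x, uR' r) + (∫ r in x..y, uR' r) = ∫ r in z₀..y, uR' r :=
      intervalIntegral.integral_add_adjacent_intervals (hIntu z₀ x) (hIntu x y)
    have hnn : 0 ≤ ∫ r in x..y, uR' r :=
      intervalIntegral.integral_nonneg hxy (fun r _ => (huR'pos r).le)
    linarith
  -- main
  intro s₁ hs₁ s₂ hs₂ h12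
  simp only [Set.mem_Ioi] at hs₁ hs₂
  set x₁ := s₁ - γ with hx₁
  set x₂ := s₂ - γ with hx₂
  have hz₁ : z₀ ≤ x₁ := by simp [hx₁]; linarith
  have hz₂ : z₀ ≤ x₂ := by simp [hx₂]; linarith
  have hxx : x₁ ≤ x₂ := by simp [hx₁, hx₂]; linarith
  rw [hH, hH]
  have hu1 : 0 ≤ uR x₁ := huRnn _ hz₁
  have hu2 : 0 ≤ uR x₂ := huRnn _ hz₂
  have hu'1 : 0 < uR' x₁ := huR'pos _
  have hu'2 : 0 < uR' x₂ := huR'pos _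
  have hd1 : 0 < uR x₁ + c * uR' x₁ := by nlinarith
  have hd2 : 0 < uR x₂ + c * uR' x₂ := by nlinarith
  rw [div_le_div_iff₀ hd2 hd1]
  have key : uR' x₂ * uR x₁ ≤ uR' x₁ * uR x₂ :=
    calc uR' x₂ * uR x₁ ≤ uR' x₁ * uR x₁ :=
          mul_le_mul_of_nonneg_right (huR'anti _ _ hxx) hu1
      _ ≤ uR' x₁ * uR x₂ := mul_le_mul_of_nonneg_left (huRmono _ _ hxx) hu'1.le
  nlinarith
end

section
/- Let u : ℝ → ℝ be C¹ with u > 0 and u' > 0 on [z₀, ∞), with u' non-increasing and lim_{x→∞} u(x) = ∞, and let c > 0. Then for any d > 0, the series ∑_{n=1}^∞ c·u'(d·n) / (u(d·n) + c·u'(d·n)) diverges. -/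
open Real

/-- If `u` is `C¹`, positive, strictly increasing with non-increasing derivative on
`[z₀,∞)` and `u(x) → ∞`, then `∑ₙ c u'(dn)/(u(dn) + c u'(dn))` diverges. -/
theorem stmt_2 (z₀ c d : ℝ) (hc : 0 < c) (hd : 0 < d)
    (u : ℝ → ℝ) (hu : ContDiff ℝ 1 u)
    (hupos : ∀ x ∈ Set.Ici z₀, 0 < u x)
    (hu'pos : ∀ x ∈ Set.Ici z₀, 0 < deriv u x)
    (hu'anti : AntitoneOn (deriv u) (Set.Ici z₀))
    (hinf : Filter.Tendsto u Filter.atTop Filter.atTop) :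
    ¬ Summable (fun n : ℕ =>
      c * deriv u (d * (n + 1)) / (u (d * (n + 1)) + c * deriv u (d * (n + 1)))) := by
  intro hf
  have hdiff : Differentiable ℝ u := hu.differentiable one_ne_zero
  set N : ℕ := ⌈z₀ / d⌉₊ with hNdef
  have hzN : ∀ n : ℕ, N ≤ n → z₀ ≤ d * (n + 1) := by
    intro n hn
    have h1 : z₀ / d ≤ (N : ℝ) := Nat.le_ceil _
    have h2 : z₀ ≤ d * N := by rw [mul_comm]; exact (div_le_iff₀ hd).mp h1
    have h3 : (N : ℝ) ≤ n := Nat.cast_le.mpr hn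
    nlinarith
  set a : ℕ → ℝ := fun n => u (d * (n + 1)) with hadef
  set b : ℕ → ℝ := fun n => deriv u (d * (n + 1)) with hbdef
  set f : ℕ → ℝ := fun n : ℕ => c * b n / (a n + c * b n) with hfdef
  have key : ∀ n : ℕ, N ≤ n →
      0 ≤ Real.log (a (n + 1)) - Real.log (a n) ∧
      Real.log (a (n + 1)) - Real.log (a n) ≤ d * (b n / a n) := by
    intro n hn
    have hx : z₀ ≤ d * ((n : ℝ) + 1) := hzN n hn
    have hxy : d * ((n : ℝ) + 1) < d * ((n : ℝ) + 1 + 1) := by nlinarith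
    obtain ⟨ξ, hξ, hslope⟩ := exists_deriv_eq_slope u hxy hdiff.continuous.continuousOn
      hdiff.differentiableOn
    have hξz : z₀ ≤ ξ := le_trans hx hξ.1.le
    have hdξ : 0 < deriv u ξ := hu'pos ξ hξz
    have hux : 0 < a n := hupos _ hx
    have hne : d * ((n : ℝ) + 1 + 1) - d * ((n : ℝ) + 1) ≠ 0 := by nlinarith
    have hslope' : u (d * ((n : ℝ) + 1 + 1)) - u (d * ((n : ℝ) + 1))
        = deriv u ξ * (d * ((n : ℝ) + 1 + 1) - d * ((n : ℝ) + 1)) :=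
      ((div_eq_iff hne).mp hslope.symm)
    have hDE : u (d * ((n : ℝ) + 1 + 1)) - u (d * ((n : ℝ) + 1)) = deriv u ξ * d := by
      rw [hslope']; ring
    have haeq : a (n + 1) = u (d * ((n : ℝ) + 1 + 1)) := by
      simp only [hadef]; push_cast; ring_nf
    have hle : deriv u ξ ≤ b n := hu'anti hx hξz hξ.1.le
    have hdiffpos : 0 < a (n + 1) - a n := by
      rw [haeq]; simp only [hadef]; rw [hDE]; positivity
    have huy : 0 < a (n + 1) := by linarith
    constructor
    · have := Real.log_le_log hux (by linarith : a n ≤ a (n + 1))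
      linarith
    · have hlog : Real.log (a (n + 1)) - Real.log (a n) = Real.log (a (n + 1) / a n) := by
        rw [Real.log_div huy.ne' hux.ne']
      rw [hlog]
      have h1 : Real.log (a (n + 1) / a n) ≤ a (n + 1) / a n - 1 :=
        Real.log_le_sub_one_of_pos (by positivity)
      have h2 : a (n + 1) / a n - 1 = (a (n + 1) - a n) / a n := by field_simp
      have h3 : a (n + 1) - a n ≤ d * b n := by
        rw [haeq]; simp only [hadef]; rw [hDE]; nlinarith
      calc Real.log (a (n + 1) / a n) ≤ (a (n + 1) - a n) / a n := by rw [← h2]; exact h1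
        _ ≤ (d * b n) / a n := by gcongr
        _ = d * (b n / a n) := by ring
  -- divergence of telescoping sums
  have htel : Filter.Tendsto
      (fun M : ℕ => ∑ n ∈ Finset.range M, (Real.log (a (n + 1)) - Real.log (a n)))
      Filter.atTop Filter.atTop := by
    have heq : (fun M : ℕ => ∑ n ∈ Finset.range M, (Real.log (a (n + 1)) - Real.log (a n)))
        = fun M : ℕ => Real.log (a M) - Real.log (a 0) := by
      funext M; exact Finset.sum_range_sub (fun n => Real.log (a n)) M
    rw [heq]
    have h1 : Filter.Tendsto (fun M : ℕ => d * ((M : ℝ) + 1)) Filter.atTop Filter.atTop := by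
      apply Filter.Tendsto.const_mul_atTop hd
      exact Filter.tendsto_atTop_add_const_right _ 1 tendsto_natCast_atTop_atTop
    have h2 : Filter.Tendsto (fun M : ℕ => Real.log (a M)) Filter.atTop Filter.atTop :=
      Real.tendsto_log_atTop.comp (hinf.comp h1)
    simpa [sub_eq_add_neg] using Filter.tendsto_atTop_add_const_right _ (-Real.log (a 0)) h2
  have hgns : ¬ Summable (fun n => Real.log (a (n + 1)) - Real.log (a n)) := by
    intro hs
    exact not_tendsto_nhds_of_tendsto_atTop htel _ hs.hasSum.tendsto_sum_nat
  apply hgns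
  -- eventual bound
  have hf0 : Filter.Tendsto f Filter.atTop (nhds 0) := hf.tendsto_atTop_zero
  have hev : ∀ᶠ n in Filter.atTop, f n < 1 / 2 :=
    hf0.eventually (gt_mem_nhds (by norm_num : (0:ℝ) < 1/2))
  obtain ⟨M, hM⟩ := Filter.eventually_atTop.mp hev
  set K := max N M with hK
  rw [← summable_nat_add_iff K]
  have hf' : Summable (fun n => (2 * d / c) * f (n + K)) :=
    ((summable_nat_add_iff K).mpr hf).mul_left _
  apply Summable.of_nonneg_of_le (fun n => (key (n + K) (le_trans (le_max_left _ _) (Nat.le_add_left _ _))).1)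
    (fun n => ?_) hf'
  set k := n + K with hk
  have hNk : N ≤ k := le_trans (le_max_left _ _) (Nat.le_add_left _ _)
  have hMk : M ≤ k := le_trans (le_max_right _ _) (Nat.le_add_left _ _)
  have hak : 0 < a k := hupos _ (hzN k hNk)
  have hbk : 0 < b k := hu'pos _ (hzN k hNk)
  have hfk : f k < 1 / 2 := hM k hMk
  have hcb : c * b k ≤ a k := by
    have h1 : 0 < a k + c * b k := by positivity
    have : c * b k < (a k + c * b k) / 2 := by
      rw [hfdef] at hfk; dsimp at hfk
      rw [div_lt_iff₀ h1] at hfk; linarith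
    linarith
  have hlow : c * b k / (2 * a k) ≤ f k := by
    rw [hfdef]; dsimp
    apply div_le_div_of_nonneg_left (by positivity) (by positivity)
    linarith
  have hkey := (key k hNk).2
  have h2dc : (0:ℝ) < 2 * d / c := by positivity
  calc Real.log (a (k + 1)) - Real.log (a k) ≤ d * (b k / a k) := hkey
    _ = (2 * d / c) * (c * b k / (2 * a k)) := by field_simp
    _ ≤ (2 * d / c) * f k := by apply mul_le_mul_of_nonneg_left hlow h2dc.le
end

section
/- Let λ > 0 and let S_n be the sum of n i.i.d. exponential random variables with rate λ (so S_n has density λⁿ x^{n−1} e^{−λx}/(n−1)! on x ≥ 0). Let I_j = [j, j + 1/j²] for j ≥ 2, and let A = ⋃_{j≥2} I_j. Then there exists a constant C > 0 such that for all n ≥ 3, P(S_n ∈ A) ≤ C/n². -/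
open Real MeasureTheory

set_option maxHeartbeats 1000000 in
/-- If `S_n` is a sum of `n` i.i.d. exponential random variables of rate `λ` (with the
Gamma density `λⁿ x^{n−1} e^{−λx}/(n−1)!`), and `A = ⋃_{j≥2} [j, j + 1/j²]`, then
`P(S_n ∈ A) ≤ C/n²` for some constant `C` and all `n ≥ 3`. -/
theorem stmt_3 (l : ℝ) (hl : 0 < l) :
    ∃ C > 0, ∀ n : ℕ, 3 ≤ n →
      (∫ x in (⋃ j : ℕ, ⋃ (_ : 2 ≤ j), Set.Icc (j : ℝ) (j + 1 / (j : ℝ) ^ 2)),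
        l ^ n * x ^ (n - 1) * Real.exp (-(l * x)) / (Nat.factorial (n - 1) : ℝ)) ≤ C / n ^ 2 := by
  refine ⟨200 * Real.exp (2*l) * l^2, by positivity, fun n hn => ?_⟩
  have h3n : (3:ℝ) ≤ (n:ℝ) := by exact_mod_cast hn
  have hF : (0:ℝ) < (Nat.factorial (n-1) : ℝ) := by positivity
  -- rewrite the union
  have hA : (⋃ j : ℕ, ⋃ (_ : 2 ≤ j), Set.Icc (j : ℝ) (j + 1 / (j : ℝ) ^ 2))
      = ⋃ k : ℕ, Set.Icc ((k : ℝ) + 2) ((k : ℝ) + 2 + 1 / ((k : ℝ) + 2) ^ 2) := by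
    ext x
    simp only [Set.mem_iUnion]
    constructor
    · rintro ⟨j, hj, hx⟩
      refine ⟨j - 2, ?_⟩
      have hc : ((j - 2 : ℕ) : ℝ) + 2 = (j : ℝ) := by
        rw [Nat.cast_sub hj]; ring
      rw [hc]
      exact hx
    · rintro ⟨k, hx⟩
      refine ⟨k + 2, by omega, ?_⟩
      have hc : ((k + 2 : ℕ) : ℝ) = (k : ℝ) + 2 := by push_cast; ring
      rw [hc]
      exact hx
  rw [hA]
  set g : ℝ → ℝ := fun x => l ^ n * x ^ (n - 1) * Real.exp (-(l * x)) / (Nat.factorial (n - 1) : ℝ)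
    with hgdef
  set cψ : ℝ := 9/4 * Real.exp (2*l) * l^n / (Nat.factorial (n-1) : ℝ) with hcψdef
  have hcψ : 0 < cψ := by rw [hcψdef]; positivity
  set ψ : ℝ → ℝ := fun x => cψ * ((x+1)^(n-3) * Real.exp (-(l*(x+1)))) with hψdef
  have hAm : MeasurableSet (⋃ k : ℕ, Set.Icc ((k : ℝ) + 2) ((k : ℝ) + 2 + 1 / ((k : ℝ) + 2) ^ 2)) :=
    MeasurableSet.iUnion fun _ => measurableSet_Icc
  have hgm : Measurable g := by rw [hgdef]; fun_prop
  have hnn : 0 ≤ᵐ[volume.restrict (⋃ k : ℕ, Set.Icc ((k : ℝ) + 2) ((k : ℝ) + 2 + 1 / ((k : ℝ) + 2) ^ 2))] g := by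
    refine (ae_restrict_iff' hAm).mpr (ae_of_all _ fun x hx => ?_)
    obtain ⟨k, hk1, -⟩ := Set.mem_iUnion.mp hx
    have hx0 : (0:ℝ) ≤ x := le_trans (by positivity) hk1
    rw [hgdef]
    have := Real.exp_pos (-(l*x))
    have h1 : (0:ℝ) ≤ l ^ n := (pow_pos hl n).le
    have h2 : (0:ℝ) ≤ x ^ (n-1) := pow_nonneg hx0 _
    positivity
  rw [integral_eq_lintegral_of_nonneg_ae hnn hgm.aestronglyMeasurable]
  refine ENNReal.toReal_le_of_le_ofReal (by positivity) ?_
  -- per-interval bound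
  have key : ∀ k : ℕ,
      (∫⁻ x in Set.Icc ((k:ℝ)+2) ((k:ℝ)+2 + 1/((k:ℝ)+2)^2), ENNReal.ofReal (g x))
        ≤ ∫⁻ x in Set.Ico ((k:ℝ)+2) ((k:ℝ)+2+1), ENNReal.ofReal (ψ x) := by
    intro k
    have hk0 : (0:ℝ) ≤ (k:ℝ) := Nat.cast_nonneg k
    set m : ℝ := (k:ℝ)+2 with hmdef
    have hm2 : (2:ℝ) ≤ m := by rw [hmdef]; linarith
    have hm0 : (0:ℝ) < m := by linarith
    set K : ℝ := l^n * (m+1)^(n-1) * Real.exp (-(l*m)) / (Nat.factorial (n-1) : ℝ) with hKdef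
    have hK0 : (0:ℝ) ≤ K := by
      rw [hKdef]
      have h1 : (0:ℝ) ≤ l ^ n := (pow_pos hl n).le
      have h2 : (0:ℝ) ≤ (m+1) ^ (n-1) := pow_nonneg (by linarith) _
      positivity
    have step1 : (∫⁻ x in Set.Icc m (m + 1/m^2), ENNReal.ofReal (g x))
        ≤ ENNReal.ofReal (K * (1/m^2)) := by
      calc ∫⁻ x in Set.Icc m (m + 1/m^2), ENNReal.ofReal (g x)
          ≤ ∫⁻ _ in Set.Icc m (m + 1/m^2), ENNReal.ofReal K := by
            refine setLIntegral_mono measurable_const fun x hx => ENNReal.ofReal_le_ofReal ?_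
            obtain ⟨hx1, hx2⟩ := hx
            have hx0 : (0:ℝ) ≤ x := by linarith
            have hmm : 1/m^2 ≤ 1 := by
              rw [div_le_one (by positivity)]; nlinarith
            have hxu : x ≤ m + 1 := by linarith
            have e1 : x^(n-1) ≤ (m+1)^(n-1) := pow_le_pow_left₀ hx0 hxu _
            have e2 : Real.exp (-(l*x)) ≤ Real.exp (-(l*m)) := by
              apply Real.exp_le_exp.mpr
              have : l*m ≤ l*x := mul_le_mul_of_nonneg_left hx1 hl.le
              linarith
            rw [hgdef, hKdef]
            have hmul : l^n * x^(n-1) * Real.exp (-(l*x))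
                ≤ l^n * (m+1)^(n-1) * Real.exp (-(l*m)) := by
              apply mul_le_mul
                (mul_le_mul le_rfl e1 (pow_nonneg hx0 _) (pow_pos hl n).le)
                e2 (Real.exp_pos _).le
              have : (0:ℝ) ≤ (m+1) ^ (n-1) := pow_nonneg (by linarith) _
              positivity
            exact div_le_div_of_nonneg_right hmul hF.le
        _ = ENNReal.ofReal K * volume (Set.Icc m (m + 1/m^2)) := setLIntegral_const _ _
        _ = ENNReal.ofReal (K * (1/m^2)) := by
            rw [Real.volume_Icc, ← ENNReal.ofReal_mul hK0]
            congr 1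
            ring
    refine step1.trans ?_
    -- constant ≤ integral over Ico of ψ
    have hpt : ∀ x ∈ Set.Ico m (m+1), K * (1/m^2) ≤ ψ x := by
      intro x hx
      obtain ⟨hx1, hx2⟩ := hx
      have p1 : (m+1)^(n-3) ≤ (x+1)^(n-3) := pow_le_pow_left₀ (by linarith) (by linarith) _
      have p2 : Real.exp (-(l*(m+2))) ≤ Real.exp (-(l*(x+1))) := by
        apply Real.exp_le_exp.mpr
        have : l*(x+1) ≤ l*(m+2) := mul_le_mul_of_nonneg_left (by linarith) hl.le
        linarith
      have hψge : cψ * ((m+1)^(n-3) * Real.exp (-(l*(m+2)))) ≤ ψ x := by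
        rw [hψdef]
        apply mul_le_mul_of_nonneg_left _ hcψ.le
        apply mul_le_mul p1 p2 (Real.exp_pos _).le (pow_nonneg (by linarith) _)
      refine le_trans ?_ hψge
      have hexpid : Real.exp (2*l) * Real.exp (-(l*(m+2))) = Real.exp (-(l*m)) := by
        rw [← Real.exp_add]
        congr 1
        ring
      have hpow : (m+1)^(n-1) = (m+1)^(n-3) * (m+1)^2 := by
        rw [← pow_add]
        congr 1
        omega
      rw [hKdef, hcψdef, hpow]
      have h94 : (m+1)^2 * (1/m^2) ≤ 9/4 := by
        rw [mul_one_div, div_le_div_iff₀ (by positivity) (by norm_num)]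
        nlinarith
      have hfacnn : (0:ℝ) ≤ l^n * (m+1)^(n-3) * Real.exp (-(l*(m+2))) * Real.exp (2*l)
          / (Nat.factorial (n-1) : ℝ) := by
        have h1 : (0:ℝ) ≤ l ^ n := (pow_pos hl n).le
        have h2 : (0:ℝ) ≤ (m+1) ^ (n-3) := pow_nonneg (by linarith) _
        positivity
      calc l^n * ((m+1)^(n-3) * (m+1)^2) * Real.exp (-(l*m)) / (Nat.factorial (n-1) : ℝ) * (1/m^2)
          = l^n * ((m+1)^(n-3) * (m+1)^2) * (Real.exp (2*l) * Real.exp (-(l*(m+2)))) / (Nat.factorial (n-1) : ℝ) * (1/m^2) := by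
            rw [hexpid]
        _ = (l^n * (m+1)^(n-3) * Real.exp (-(l*(m+2))) * Real.exp (2*l) / (Nat.factorial (n-1) : ℝ)) * ((m+1)^2 * (1/m^2)) := by
            ring
        _ ≤ (l^n * (m+1)^(n-3) * Real.exp (-(l*(m+2))) * Real.exp (2*l) / (Nat.factorial (n-1) : ℝ)) * (9/4) := by
            exact mul_le_mul_of_nonneg_left h94 hfacnn
        _ = 9/4 * Real.exp (2*l) * l^n / (Nat.factorial (n-1) : ℝ) * ((m+1)^(n-3) * Real.exp (-(l*(m+2)))) := by
            ring
    calc ENNReal.ofReal (K * (1/m^2))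
        = ∫⁻ _ in Set.Ico m (m+1), ENNReal.ofReal (K * (1/m^2)) := by
          rw [setLIntegral_const, Real.volume_Ico]
          norm_num
      _ ≤ ∫⁻ x in Set.Ico m (m+1), ENNReal.ofReal (ψ x) := by
          refine setLIntegral_mono ?_ fun x hx => ENNReal.ofReal_le_ofReal (hpt x hx)
          rw [hψdef]
          fun_prop
  -- disjointness of the Ico's
  have hdisj : Pairwise (Function.onFun Disjoint
      fun k : ℕ => Set.Ico ((k:ℝ)+2) ((k:ℝ)+2+1)) := by
    intro i j hij
    have : Disjoint (Set.Ico ((i:ℝ)+2) ((i:ℝ)+2+1)) (Set.Ico ((j:ℝ)+2) ((j:ℝ)+2+1)) := by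
      rw [Set.Ico_disjoint_Ico]
      rcases hij.lt_or_gt with h | h
      · have hij' : (i:ℝ) + 1 ≤ (j:ℝ) := by exact_mod_cast Nat.succ_le_of_lt h
        refine (min_le_left _ _).trans (le_trans (by linarith) (le_max_right _ _))
      · have hij' : (j:ℝ) + 1 ≤ (i:ℝ) := by exact_mod_cast Nat.succ_le_of_lt h
        refine (min_le_right _ _).trans (le_trans (by linarith) (le_max_left _ _))
    exact this
  have hsub : (⋃ k : ℕ, Set.Ico ((k:ℝ)+2) ((k:ℝ)+2+1)) ⊆ Set.Ici (0:ℝ) := by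
    refine Set.iUnion_subset fun k x hx => ?_
    have hk0 : (0:ℝ) ≤ (k:ℝ) := Nat.cast_nonneg k
    have := hx.1
    simp only [Set.mem_Ici]
    linarith
  -- translation step
  have htrans : (∫⁻ x in Set.Ici (0:ℝ), ENNReal.ofReal (ψ x))
      = ∫⁻ y in Set.Ici (1:ℝ), ENNReal.ofReal (cψ * (y^(n-3) * Real.exp (-(l*y)))) := by
    rw [← lintegral_indicator (measurableSet_Ici (a := (0:ℝ))),
      ← lintegral_indicator (measurableSet_Ici (a := (1:ℝ)))]
    have hptw : ∀ x : ℝ, (Set.Ici (0:ℝ)).indicator (fun x => ENNReal.ofReal (ψ x)) x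
        = (Set.Ici (1:ℝ)).indicator
            (fun y => ENNReal.ofReal (cψ * (y^(n-3) * Real.exp (-(l*y))))) (x+1) := by
      intro x
      simp only [Set.indicator_apply, Set.mem_Ici]
      by_cases hx : (0:ℝ) ≤ x
      · rw [if_pos hx, if_pos (by linarith : (1:ℝ) ≤ x + 1)]
      · rw [if_neg hx, if_neg (by intro h; exact hx (by linarith))]
    simp_rw [hptw]
    exact lintegral_add_right_eq_self _ 1
  -- constant pull-out
  have hmeas2 : Measurable fun y : ℝ => ENNReal.ofReal (y^(n-3) * Real.exp (-(l*y))) := by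
    fun_prop
  have hconst : (∫⁻ y in Set.Ici (0:ℝ), ENNReal.ofReal (cψ * (y^(n-3) * Real.exp (-(l*y)))))
      = ENNReal.ofReal cψ * ∫⁻ y in Set.Ici (0:ℝ), ENNReal.ofReal (y^(n-3) * Real.exp (-(l*y))) := by
    simp_rw [ENNReal.ofReal_mul hcψ.le]
    exact lintegral_const_mul _ hmeas2
  -- gamma integral
  have c2 : ((n-2:ℕ):ℝ) = (n:ℝ) - 2 := by rw [Nat.cast_sub (by omega)]; norm_num
  have c3 : ((n-3:ℕ):ℝ) = (n:ℝ) - 3 := by rw [Nat.cast_sub (by omega)]; norm_num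
  have hgamma : (∫⁻ y in Set.Ici (0:ℝ), ENNReal.ofReal (y^(n-3) * Real.exp (-(l*y))))
      = ENNReal.ofReal ((Nat.factorial (n-3) : ℝ) / l^(n-2)) := by
    have ha : (0:ℝ) < ((n-2 : ℕ) : ℝ) := by rw [c2]; linarith
    set c : ℝ := l^(n-2) / (Nat.factorial (n-3) : ℝ) with hcdef
    have hc : 0 < c := by positivity
    have h1 := ProbabilityTheory.lintegral_gammaPDF_eq_one (a := ((n-2:ℕ):ℝ)) (r := l) ha hl
    rw [← lintegral_add_compl _ (measurableSet_Ici (a := (0:ℝ))), Set.compl_Ici,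
      ProbabilityTheory.lintegral_gammaPDF_of_nonpos le_rfl, add_zero] at h1
    have h3 : ∀ᵐ x ∂(volume : Measure ℝ), x ∈ Set.Ici (0:ℝ) →
        ProbabilityTheory.gammaPDF ((n-2:ℕ):ℝ) l x
          = ENNReal.ofReal c * ENNReal.ofReal (x^(n-3) * Real.exp (-(l*x))) := by
      refine ae_of_all _ fun x hx => ?_
      rw [ProbabilityTheory.gammaPDF_of_nonneg hx, ← ENNReal.ofReal_mul hc.le]
      congr 1
      have e1 : l ^ (((n-2:ℕ)):ℝ) = l ^ (n-2 : ℕ) := Real.rpow_natCast l (n-2)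
      have e2 : x ^ ((((n-2:ℕ)):ℝ) - 1) = x ^ (n-3 : ℕ) := by
        rw [show ((((n-2:ℕ)):ℝ) - 1) = ((n-3:ℕ):ℝ) by rw [c2, c3]; ring]
        exact Real.rpow_natCast x (n-3)
      have e3 : Real.Gamma (((n-2:ℕ)):ℝ) = (Nat.factorial (n-3) : ℝ) := by
        rw [show (((n-2:ℕ)):ℝ) = ((n-3:ℕ):ℝ) + 1 by rw [c2, c3]; ring]
        exact_mod_cast Real.Gamma_nat_eq_factorial (n-3)
      rw [e1, e2, e3, hcdef]
      ring
    rw [setLIntegral_congr_fun_ae measurableSet_Ici h3] at h1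
    rw [lintegral_const_mul _ hmeas2] at h1
    have hcne : ENNReal.ofReal c ≠ 0 := by simp [ENNReal.ofReal_eq_zero, not_le, hc]
    have hI : (∫⁻ y in Set.Ici (0:ℝ), ENNReal.ofReal (y^(n-3) * Real.exp (-(l*y))))
        = (ENNReal.ofReal c)⁻¹ := by
      calc (∫⁻ y in Set.Ici (0:ℝ), ENNReal.ofReal (y^(n-3) * Real.exp (-(l*y))))
          = (ENNReal.ofReal c)⁻¹ * (ENNReal.ofReal c * ∫⁻ y in Set.Ici (0:ℝ), ENNReal.ofReal (y^(n-3) * Real.exp (-(l*y)))) := by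
            rw [← mul_assoc, ENNReal.inv_mul_cancel hcne ENNReal.ofReal_ne_top, one_mul]
        _ = (ENNReal.ofReal c)⁻¹ := by rw [h1, mul_one]
    rw [hI, ← ENNReal.ofReal_inv_of_pos hc, hcdef, inv_div]
  -- final real inequality
  have hfinal : cψ * ((Nat.factorial (n-3) : ℝ) / l^(n-2))
      ≤ 200 * Real.exp (2*l) * l^2 / (n:ℝ)^2 := by
    have hd : (0:ℝ) < (Nat.factorial (n-3) : ℝ) := by positivity
    have hL : (0:ℝ) < l^(n-2) := pow_pos hl _
    have hFeq : (Nat.factorial (n-1) : ℝ)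
        = ((n:ℝ)-1) * (((n:ℝ)-2) * (Nat.factorial (n-3) : ℝ)) := by
      have hnat : Nat.factorial (n-1) = ((n-3)+2) * (((n-3)+1) * Nat.factorial (n-3)) := by
        rw [show n-1 = (n-3)+2 by omega]
        simp [Nat.factorial]
      rw [hnat]
      push_cast
      rw [c3]
      ring
    have hpow : l^n = l^(n-2) * l^2 := by
      rw [← pow_add]
      congr 1
      omega
    rw [hcψdef, hFeq, hpow]
    have hE : (0:ℝ) < Real.exp (2*l) := Real.exp_pos _
    have h1 : (0:ℝ) < (n:ℝ) - 1 := by linarith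
    have h2 : (0:ℝ) < (n:ℝ) - 2 := by linarith
    clear hF
    have heq : 9/4 * Real.exp (2*l) * (l^(n-2) * l^2) / (((n:ℝ)-1) * (((n:ℝ)-2) * (Nat.factorial (n-3) : ℝ)))
        * ((Nat.factorial (n-3) : ℝ) / l^(n-2))
        = (9/4 * Real.exp (2*l) * l^2) / (((n:ℝ)-1) * ((n:ℝ)-2)) := by
      rw [div_mul_div_comm, div_eq_div_iff
        (mul_pos (mul_pos h1 (mul_pos h2 hd)) hL).ne' (mul_pos h1 h2).ne']
      ring
    have hn0 : (0:ℝ) < (n:ℝ)^2 := by nlinarith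
    rw [heq, div_le_div_iff₀ (mul_pos h1 h2) hn0]
    have hq : 9/4*(n:ℝ)^2 ≤ 200*(((n:ℝ)-1)*((n:ℝ)-2)) := by nlinarith [sq_nonneg ((n:ℝ)-3)]
    have hb : (Real.exp (2*l)*l^2) * (9/4*(n:ℝ)^2)
        ≤ (Real.exp (2*l)*l^2) * (200*(((n:ℝ)-1)*((n:ℝ)-2))) :=
      mul_le_mul_of_nonneg_left hq (by positivity)
    nlinarith [hb]
  -- chain everything
  calc ∫⁻ x in ⋃ k : ℕ, Set.Icc ((k:ℝ)+2) ((k:ℝ)+2 + 1/((k:ℝ)+2)^2), ENNReal.ofReal (g x)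
      ≤ ∑' k : ℕ, ∫⁻ x in Set.Icc ((k:ℝ)+2) ((k:ℝ)+2 + 1/((k:ℝ)+2)^2), ENNReal.ofReal (g x) :=
        lintegral_iUnion_le _ _
    _ ≤ ∑' k : ℕ, ∫⁻ x in Set.Ico ((k:ℝ)+2) ((k:ℝ)+2+1), ENNReal.ofReal (ψ x) :=
        ENNReal.tsum_le_tsum key
    _ = ∫⁻ x in ⋃ k : ℕ, Set.Ico ((k:ℝ)+2) ((k:ℝ)+2+1), ENNReal.ofReal (ψ x) :=
        (lintegral_iUnion (fun _ => measurableSet_Ico) hdisj _).symm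
    _ ≤ ∫⁻ x in Set.Ici (0:ℝ), ENNReal.ofReal (ψ x) := lintegral_mono_set hsub
    _ = ∫⁻ y in Set.Ici (1:ℝ), ENNReal.ofReal (cψ * (y^(n-3) * Real.exp (-(l*y)))) := htrans
    _ ≤ ∫⁻ y in Set.Ici (0:ℝ), ENNReal.ofReal (cψ * (y^(n-3) * Real.exp (-(l*y)))) :=
        lintegral_mono_set (Set.Ici_subset_Ici.mpr zero_le_one)
    _ = ENNReal.ofReal cψ * ∫⁻ y in Set.Ici (0:ℝ), ENNReal.ofReal (y^(n-3) * Real.exp (-(l*y))) :=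
        hconst
    _ = ENNReal.ofReal cψ * ENNReal.ofReal ((Nat.factorial (n-3) : ℝ) / l^(n-2)) := by
        rw [hgamma]
    _ = ENNReal.ofReal (cψ * ((Nat.factorial (n-3) : ℝ) / l^(n-2))) :=
        (ENNReal.ofReal_mul hcψ.le).symm
    _ ≤ ENNReal.ofReal (200 * Real.exp (2*l) * l^2 / (n:ℝ)^2) :=
        ENNReal.ofReal_le_ofReal hfinal
end

section
/- Let γ > 0, k ≥ 1, and b^T(x) = (1/(2γ))·log log x + (k/(2γ))·log log log x for x ≥ z₀ (z₀ large). Define u_T(x) = ∫_{z₀}^x exp(−∫_{z₀}^y 2 b^T(r) dr) dy. Then there exist constants C₃, C₄ > 0 such that for all sufficiently large x: C₃/((log x)·(log log x)^{k−1}) ≤ u_T'(x)/(u_T(x) − u_T(x−γ)) ≤ C₄/((log x)·(log log x)^{k−1}). -/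
set_option maxHeartbeats 1000000

open Real intervalIntegral MeasureTheory Set Filter


/-- `A ^ (-1/2) ≤ B` from `1 ≤ A * B^2`. -/
lemma my_rpow_nh_le {A B : ℝ} (hA : 0 < A) (hB : 0 ≤ B) (h : 1 ≤ A * B ^ 2) :
    A ^ (-(1/2) : ℝ) ≤ B := by
  have hsA : 0 < Real.sqrt A := Real.sqrt_pos.2 hA
  have h2 : Real.sqrt A * Real.sqrt A = A := Real.mul_self_sqrt hA.le
  have ht : 0 ≤ B * Real.sqrt A := mul_nonneg hB hsA.le
  have ht2 : 1 ≤ (B * Real.sqrt A) ^ 2 := by nlinarith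
  have h3 : 1 ≤ B * Real.sqrt A := by nlinarith
  rw [Real.rpow_neg hA.le, ← Real.sqrt_eq_rpow, inv_eq_one_div, div_le_iff₀ hsA]
  linarith

/-- `A ^ (-1/2) ≤ c * B ^ (-1/2)` from `B ≤ c^2 * A`. -/
lemma my_rpow_nh_div {A B c : ℝ} (hB : 0 < B) (hc : 0 < c) (h : B ≤ c ^ 2 * A) :
    A ^ (-(1/2) : ℝ) ≤ c * B ^ (-(1/2) : ℝ) := by
  have hA : 0 < A := by nlinarith
  have h1 : B / c ^ 2 ≤ A := by rw [div_le_iff₀ (by positivity)]; nlinarith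
  have h2 : A ^ (-(1/2):ℝ) ≤ (B / c ^ 2) ^ (-(1/2):ℝ) :=
    Real.rpow_le_rpow_of_nonpos (by positivity) h1 (by norm_num)
  refine h2.trans_eq ?_
  rw [Real.div_rpow hB.le (by positivity)]
  rw [← Real.rpow_natCast c 2, ← Real.rpow_mul hc.le]
  norm_num
  rw [Real.rpow_neg_one]
  field_simp

lemma my_II_abs_rpow (s a b : ℝ) :
    IntervalIntegrable (fun r : ℝ => |r - s| ^ (-(1/2) : ℝ)) volume a b := by
  have base : ∀ c : ℝ, 0 ≤ c →
      IntervalIntegrable (fun r : ℝ => |r| ^ (-(1/2):ℝ)) volume 0 c := by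
    intro c hc
    have h := intervalIntegrable_rpow' (a := 0) (b := c) (r := (-(1/2):ℝ)) (by norm_num)
    rw [intervalIntegrable_iff] at h ⊢
    refine h.congr_fun (fun x hx => ?_) measurableSet_uIoc
    rw [uIoc_of_le hc] at hx
    rw [abs_of_pos hx.1]
  have full : ∀ c : ℝ, IntervalIntegrable (fun r : ℝ => |r| ^ (-(1/2):ℝ)) volume 0 c := by
    intro c
    rcases le_total 0 c with hc | hc
    · exact base c hc
    · have h := (IntervalIntegrable.iff_comp_neg (f := fun r : ℝ => |r| ^ (-(1/2):ℝ)) (a := 0) (b := -c) enorm_ne_top).mp (base (-c) (by linarith))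
      simp only [abs_neg, neg_zero, neg_neg] at h
      exact h
  have full0 : IntervalIntegrable (fun r : ℝ => |r| ^ (-(1/2):ℝ)) volume (a - s) (b - s) :=
    (full (a - s)).symm.trans (full (b - s))
  have := full0.comp_sub_right s
  simpa using this

/-- P1 -/
lemma my_abs_log_le (t : ℝ) : |Real.log t| ≤ |t| + 2 * |t| ^ (-(1/2):ℝ) := by
  have key : ∀ u : ℝ, 0 ≤ u → |Real.log u| ≤ u + 2 * u ^ (-(1/2):ℝ) := by
    intro u hu
    rcases eq_or_lt_of_le hu with h0 | h0
    · rw [← h0]; simp [Real.zero_rpow (show (-(1/2):ℝ) ≠ 0 by norm_num)]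
    rcases le_or_gt 1 u with h1 | h1
    · rw [abs_of_nonneg (Real.log_nonneg h1)]
      have := Real.log_le_sub_one_of_pos h0
      have : 0 ≤ u ^ (-(1/2):ℝ) := by positivity
      linarith [Real.log_le_sub_one_of_pos h0]
    · rw [abs_of_neg (Real.log_neg h0 h1)]
      have hru : 0 < u ^ (-(1/2):ℝ) := Real.rpow_pos_of_pos h0 _
      have h2 : Real.log (u ^ (-(1/2):ℝ)) = -(1/2) * Real.log u := Real.log_rpow h0 _
      have h3 := Real.log_le_sub_one_of_pos hru
      linarith
  have : |Real.log t| = abs (Real.log (abs t)) := by rw [Real.log_abs]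
  rw [this]
  exact key |t| (abs_nonneg t)

/-- P2 -/
lemma my_log_lb {t : ℝ} (h1 : 1/2 ≤ t) (h2 : t ≤ 2) : |t - 1| / 2 ≤ |Real.log t| := by
  have ht : 0 < t := by linarith
  rcases le_or_gt 1 t with h | h
  · rw [abs_of_nonneg (by linarith), abs_of_nonneg (Real.log_nonneg h)]
    have hinv := Real.log_le_sub_one_of_pos (inv_pos.2 ht)
    rw [Real.log_inv] at hinv
    have h3 : 1 - t⁻¹ ≤ Real.log t := by linarith
    have h4 : (t - 1) / 2 ≤ 1 - t⁻¹ := by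
      rw [div_le_iff₀ (by norm_num : (0:ℝ) < 2)]
      nlinarith [mul_inv_cancel₀ ht.ne', ht]
    linarith
  · rw [abs_of_neg (by linarith), abs_of_neg (Real.log_neg ht h)]
    have := Real.log_le_sub_one_of_pos ht
    linarith

/-- H1 -/
lemma my_H1 {u : ℝ} (hu : 0 ≤ u) :
    2 * |Real.log u| ^ (-(1/2):ℝ) ≤ 8 + 3 * |u - 1| ^ (-(1/2):ℝ) := by
  have hr1 : (0:ℝ) ≤ |u - 1| ^ (-(1/2):ℝ) := by positivity
  rcases eq_or_lt_of_le hu with h0 | h0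
  · rw [← h0]
    simp [Real.zero_rpow (show (-(1/2):ℝ) ≠ 0 by norm_num)]
    norm_num
  rcases eq_or_ne u 1 with h1 | h1
  · rw [h1]
    simp [Real.zero_rpow (show (-(1/2):ℝ) ≠ 0 by norm_num)]
  by_cases hnear : |u - 1| ≤ 1/4
  · have habs := abs_le.1 hnear
    have hlb := my_log_lb (show 1/2 ≤ u by linarith) (show u ≤ 2 by linarith)
    have hB : 0 < |u - 1| := abs_pos.2 (sub_ne_zero.2 h1)
    have key : |Real.log u| ^ (-(1/2):ℝ) ≤ (3/2) * |u - 1| ^ (-(1/2):ℝ) := by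
      apply my_rpow_nh_div hB (by norm_num)
      nlinarith
    linarith
  · push_neg at hnear
    have hlb : 1/5 ≤ |Real.log u| := by
      rcases le_or_gt 1 u with h | h
      · have h54 : 5/4 ≤ u := by
          rcases abs_cases (u - 1) with ⟨he, _⟩ | ⟨he, _⟩ <;> [linarith; linarith]
        have hinv := Real.log_le_sub_one_of_pos (inv_pos.2 (show (0:ℝ) < u by linarith))
        rw [Real.log_inv] at hinv
        have hui : u⁻¹ ≤ 4/5 := by
          rw [inv_le_comm₀ (by linarith) (by norm_num)]; linarith
        rw [abs_of_nonneg (Real.log_nonneg h)]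
        linarith
      · have h34 : u ≤ 3/4 := by
          rcases abs_cases (u - 1) with ⟨he, _⟩ | ⟨he, _⟩ <;> [linarith; linarith]
        rw [abs_of_neg (Real.log_neg h0 h)]
        have := Real.log_le_sub_one_of_pos h0
        linarith
    have h2 : |Real.log u| ^ (-(1/2):ℝ) ≤ (1/5 : ℝ) ^ (-(1/2):ℝ) :=
      Real.rpow_le_rpow_of_nonpos (by norm_num) hlb (by norm_num)
    have h3 : ((1/5 : ℝ)) ^ (-(1/2):ℝ) ≤ 3 := my_rpow_nh_le (by norm_num) (by norm_num) (by norm_num)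
    linarith

/-- H3 -/
lemma my_H3 (r : ℝ) :
    (abs (|Real.log r| - 1)) ^ (-(1/2):ℝ) ≤
      2 + 3 * (|r - Real.exp 1| ^ (-(1/2):ℝ) + |r + Real.exp 1| ^ (-(1/2):ℝ)
        + |r - (Real.exp 1)⁻¹| ^ (-(1/2):ℝ) + |r + (Real.exp 1)⁻¹| ^ (-(1/2):ℝ)) := by
  have hE1 : (2:ℝ) < Real.exp 1 := by have := Real.exp_one_gt_d9; norm_num at this ⊢; linarith
  have hE2 : Real.exp 1 < 3 := by have := Real.exp_one_lt_d9; norm_num at this ⊢; linarith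
  have hT1 : (0:ℝ) ≤ |r - Real.exp 1| ^ (-(1/2):ℝ) := by positivity
  have hT2 : (0:ℝ) ≤ |r + Real.exp 1| ^ (-(1/2):ℝ) := by positivity
  have hT3 : (0:ℝ) ≤ |r - (Real.exp 1)⁻¹| ^ (-(1/2):ℝ) := by positivity
  have hT4 : (0:ℝ) ≤ |r + (Real.exp 1)⁻¹| ^ (-(1/2):ℝ) := by positivity
  by_cases hA0 : abs (|Real.log r| - 1) = 0
  · rw [hA0, Real.zero_rpow (show (-(1/2):ℝ) ≠ 0 by norm_num)]; linarith
  by_cases hfar : 1/4 ≤ abs (|Real.log r| - 1)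
  · have h2 : (abs (|Real.log r| - 1)) ^ (-(1/2):ℝ) ≤ ((1:ℝ)/4) ^ (-(1/2):ℝ) :=
      Real.rpow_le_rpow_of_nonpos (by norm_num) hfar (by norm_num)
    have h3 : ((1:ℝ)/4) ^ (-(1/2):ℝ) ≤ 2 := my_rpow_nh_le (by norm_num) (by norm_num) (by norm_num)
    linarith
  push_neg at hfar
  have hnear := abs_lt.1 hfar
  have hr0 : r ≠ 0 := by
    intro h; rw [h] at hfar; simp [Real.log_zero] at hfar; norm_num at hfar
  have ht : 0 < |r| := abs_pos.2 hr0
  have hlogr : Real.log r = Real.log |r| := (Real.log_abs r).symm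
  set t := |r| with htdef
  have e14a : (3:ℝ)/4 ≤ Real.exp (-(1/4):ℝ) := by
    have := Real.add_one_le_exp (-(1/4):ℝ); linarith
  have e14b : Real.exp ((1/4):ℝ) ≤ 4/3 := by
    have hmul : Real.exp ((1/4):ℝ) * Real.exp (-(1/4):ℝ) = 1 := by
      rw [← Real.exp_add]; norm_num
    nlinarith [Real.exp_pos ((1/4):ℝ), Real.exp_pos (-(1/4):ℝ)]
  rcases le_or_gt 0 (Real.log t) with hsgn | hsgn
  · -- positive branch: singularity at E = exp 1
    have hu : |Real.log r| = Real.log t := by rw [hlogr, abs_of_nonneg hsgn]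
    rw [hu] at hfar hnear hA0 ⊢
    have hv : Real.log (t / Real.exp 1) = Real.log t - 1 := by
      rw [Real.log_div ht.ne' (Real.exp_ne_zero 1), Real.log_exp]
    have htE : t / Real.exp 1 = Real.exp (Real.log t - 1) := by
      rw [← hv, Real.exp_log (by positivity)]
    have hv1 : 1/2 ≤ t / Real.exp 1 := by
      rw [htE]
      have := Real.exp_le_exp.mpr (show (-(1/4):ℝ) ≤ Real.log t - 1 by linarith)
      linarith
    have hv2 : t / Real.exp 1 ≤ 2 := by
      rw [htE]
      have := Real.exp_le_exp.mpr (show Real.log t - 1 ≤ ((1/4):ℝ) by linarith)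
      linarith
    have hP2 := my_log_lb hv1 hv2
    rw [hv] at hP2
    have habs : |t / Real.exp 1 - 1| = |t - Real.exp 1| / Real.exp 1 := by
      rw [show t / Real.exp 1 - 1 = (t - Real.exp 1) / Real.exp 1 by field_simp,
        abs_div, abs_of_pos (Real.exp_pos 1)]
    rw [habs] at hP2
    have hBpos : 0 < |t - Real.exp 1| := by
      rcases eq_or_ne t (Real.exp 1) with h | h
      · exfalso; apply hA0; rw [h, Real.log_exp]; simp
      · exact abs_pos.2 (sub_ne_zero.2 h)
    have hkey : (abs (Real.log t - 1)) ^ (-(1/2):ℝ) ≤ 3 * |t - Real.exp 1| ^ (-(1/2):ℝ) := by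
      apply my_rpow_nh_div hBpos (by norm_num)
      rw [div_div, div_le_iff₀ (by positivity)] at hP2
      nlinarith [abs_nonneg (Real.log t - 1), abs_nonneg (t - Real.exp 1)]
    have hsplit : |t - Real.exp 1| ^ (-(1/2):ℝ)
        ≤ |r - Real.exp 1| ^ (-(1/2):ℝ) + |r + Real.exp 1| ^ (-(1/2):ℝ) := by
      rcases le_or_gt 0 r with hrs | hrs
      · rw [htdef, abs_of_nonneg hrs]; linarith
      · rw [htdef, abs_of_neg hrs, show -r - Real.exp 1 = -(r + Real.exp 1) by ring, abs_neg]
        linarith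
    nlinarith
  · -- negative branch: singularity at E⁻¹
    have hu : |Real.log r| = -Real.log t := by rw [hlogr, abs_of_neg hsgn]
    have hA : abs (|Real.log r| - 1) = |Real.log t + 1| := by
      rw [hu, show -Real.log t - 1 = -(Real.log t + 1) by ring, abs_neg]
    rw [hA] at hfar hA0 ⊢
    rw [hu] at hnear
    have hw : Real.log (t * Real.exp 1) = Real.log t + 1 := by
      rw [Real.log_mul ht.ne' (Real.exp_ne_zero 1), Real.log_exp]
    have htE : t * Real.exp 1 = Real.exp (Real.log t + 1) := by
      rw [← hw, Real.exp_log (by positivity)]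
    have hv1 : 1/2 ≤ t * Real.exp 1 := by
      rw [htE]
      have := Real.exp_le_exp.mpr (show (-(1/4):ℝ) ≤ Real.log t + 1 by linarith)
      linarith
    have hv2 : t * Real.exp 1 ≤ 2 := by
      rw [htE]
      have := Real.exp_le_exp.mpr (show Real.log t + 1 ≤ ((1/4):ℝ) by linarith)
      linarith
    have hP2 := my_log_lb hv1 hv2
    rw [hw] at hP2
    have habs : |t * Real.exp 1 - 1| = Real.exp 1 * |t - (Real.exp 1)⁻¹| := by
      rw [show t * Real.exp 1 - 1 = Real.exp 1 * (t - (Real.exp 1)⁻¹) by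
        field_simp, abs_mul, abs_of_pos (Real.exp_pos 1)]
    rw [habs] at hP2
    have hBpos : 0 < |t - (Real.exp 1)⁻¹| := by
      rcases eq_or_ne t (Real.exp 1)⁻¹ with h | h
      · exfalso; apply hA0
        rw [h, Real.log_inv, Real.log_exp]; simp
      · exact abs_pos.2 (sub_ne_zero.2 h)
    have hkey : (abs (Real.log t + 1)) ^ (-(1/2):ℝ) ≤ 3 * |t - (Real.exp 1)⁻¹| ^ (-(1/2):ℝ) := by
      apply my_rpow_nh_div hBpos (by norm_num)
      rw [mul_comm, mul_div_assoc] at hP2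
      nlinarith [abs_nonneg (Real.log t + 1), abs_nonneg (t - (Real.exp 1)⁻¹), hE1, hP2]
    have hsplit : |t - (Real.exp 1)⁻¹| ^ (-(1/2):ℝ)
        ≤ |r - (Real.exp 1)⁻¹| ^ (-(1/2):ℝ) + |r + (Real.exp 1)⁻¹| ^ (-(1/2):ℝ) := by
      rcases le_or_gt 0 r with hrs | hrs
      · rw [htdef, abs_of_nonneg hrs]; linarith
      · rw [htdef, abs_of_neg hrs, show -r - (Real.exp 1)⁻¹ = -(r + (Real.exp 1)⁻¹) by ring,
          abs_neg]
        linarith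
    nlinarith

lemma my_LL_bound (r : ℝ) : |Real.log (Real.log r)| ≤
    (|r| + 2 * |r| ^ (-(1/2):ℝ)) + (8 + 3 * (|r - 1| ^ (-(1/2):ℝ) + |r + 1| ^ (-(1/2):ℝ))) := by
  have h1 := my_abs_log_le (Real.log r)
  have h2 := my_abs_log_le r
  have h3 : 2 * |Real.log r| ^ (-(1/2):ℝ) ≤ 8 + 3 * (abs (|r| - 1)) ^ (-(1/2):ℝ) := by
    have h := my_H1 (abs_nonneg r)
    rwa [Real.log_abs] at h
  have h4 : (abs (|r| - 1)) ^ (-(1/2):ℝ) ≤ |r - 1| ^ (-(1/2):ℝ) + |r + 1| ^ (-(1/2):ℝ) := by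
    have hp1 : (0:ℝ) ≤ |r - 1| ^ (-(1/2):ℝ) := by positivity
    have hp2 : (0:ℝ) ≤ |r + 1| ^ (-(1/2):ℝ) := by positivity
    rcases le_or_gt 0 r with hrs | hrs
    · rw [abs_of_nonneg hrs]; linarith
    · rw [abs_of_neg hrs, show -r - 1 = -(r + 1) by ring, abs_neg]; linarith
  linarith

lemma my_LLL_bound (r : ℝ) : |Real.log (Real.log (Real.log r))| ≤
    ((|r| + 2 * |r| ^ (-(1/2):ℝ)) + (8 + 3 * (|r - 1| ^ (-(1/2):ℝ) + |r + 1| ^ (-(1/2):ℝ))))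
    + (14 + 9 * (|r - Real.exp 1| ^ (-(1/2):ℝ) + |r + Real.exp 1| ^ (-(1/2):ℝ)
        + |r - (Real.exp 1)⁻¹| ^ (-(1/2):ℝ) + |r + (Real.exp 1)⁻¹| ^ (-(1/2):ℝ))) := by
  have h1 := my_abs_log_le (Real.log (Real.log r))
  have h2 := my_LL_bound r
  have h3 : 2 * |Real.log (Real.log r)| ^ (-(1/2):ℝ)
      ≤ 8 + 3 * (abs (|Real.log r| - 1)) ^ (-(1/2):ℝ) := by
    have h := my_H1 (abs_nonneg (Real.log r))
    rwa [Real.log_abs] at h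
  have h4 := my_H3 r
  linarith

lemma my_II_LL (a b : ℝ) :
    IntervalIntegrable (fun r : ℝ => Real.log (Real.log r)) volume a b := by
  have hG : IntervalIntegrable (fun r : ℝ =>
      (|r| + 2 * |r| ^ (-(1/2):ℝ)) + (8 + 3 * (|r - 1| ^ (-(1/2):ℝ) + |r + 1| ^ (-(1/2):ℝ))))
      volume a b := by
    refine IntervalIntegrable.add (IntervalIntegrable.add ?_ ?_)
      (IntervalIntegrable.add intervalIntegrable_const ?_)
    · exact continuous_abs.intervalIntegrable a b
    · have := my_II_abs_rpow 0 a b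
      simp only [sub_zero] at this
      exact this.const_mul 2
    · refine ((my_II_abs_rpow 1 a b).add ?_).const_mul 3
      have := my_II_abs_rpow (-1) a b
      simpa [sub_neg_eq_add] using this
  rw [intervalIntegrable_iff] at hG ⊢
  exact hG.mono' ((Real.measurable_log.comp Real.measurable_log).aestronglyMeasurable)
    (Filter.Eventually.of_forall fun r => by
      simpa [Real.norm_eq_abs] using my_LL_bound r)

lemma my_II_LLL (a b : ℝ) :
    IntervalIntegrable (fun r : ℝ => Real.log (Real.log (Real.log r))) volume a b := by
  have hG : IntervalIntegrable (fun r : ℝ =>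
      ((|r| + 2 * |r| ^ (-(1/2):ℝ)) + (8 + 3 * (|r - 1| ^ (-(1/2):ℝ) + |r + 1| ^ (-(1/2):ℝ))))
      + (14 + 9 * (|r - Real.exp 1| ^ (-(1/2):ℝ) + |r + Real.exp 1| ^ (-(1/2):ℝ)
          + |r - (Real.exp 1)⁻¹| ^ (-(1/2):ℝ) + |r + (Real.exp 1)⁻¹| ^ (-(1/2):ℝ))))
      volume a b := by
    refine IntervalIntegrable.add (IntervalIntegrable.add (IntervalIntegrable.add ?_ ?_)
      (IntervalIntegrable.add intervalIntegrable_const ?_))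
      (IntervalIntegrable.add intervalIntegrable_const ?_)
    · exact continuous_abs.intervalIntegrable a b
    · have := my_II_abs_rpow 0 a b
      simp only [sub_zero] at this
      exact this.const_mul 2
    · refine ((my_II_abs_rpow 1 a b).add ?_).const_mul 3
      have := my_II_abs_rpow (-1) a b
      simpa [sub_neg_eq_add] using this
    · refine ((((my_II_abs_rpow (Real.exp 1) a b).add ?_).add
        (my_II_abs_rpow (Real.exp 1)⁻¹ a b)).add ?_).const_mul 9
      · have := my_II_abs_rpow (-Real.exp 1) a b
        simpa [sub_neg_eq_add] using this
      · have := my_II_abs_rpow (-(Real.exp 1)⁻¹) a b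
        simpa [sub_neg_eq_add] using this
  rw [intervalIntegrable_iff] at hG ⊢
  exact hG.mono'
    ((Real.measurable_log.comp (Real.measurable_log.comp Real.measurable_log)).aestronglyMeasurable)
    (Filter.Eventually.of_forall fun r => by
      simpa [Real.norm_eq_abs] using my_LLL_bound r)

/-- Two-sided estimate for the hazard rate `u_T'(x)/(u_T(x) − u_T(x−γ))` when
`b^T(x) = (1/(2γ)) log log x + (k/(2γ)) log log log x`. -/
theorem stmt_5 (γ k z₀ : ℝ) (hγ : 0 < γ) (hk : 1 ≤ k)
    (bT : ℝ → ℝ)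
    (hbT : ∀ x, bT x = (1 / (2 * γ)) * Real.log (Real.log x)
      + (k / (2 * γ)) * Real.log (Real.log (Real.log x)))
    (uT : ℝ → ℝ)
    (huT : ∀ x, uT x = ∫ y in z₀..x, Real.exp (-(∫ r in z₀..y, 2 * bT r))) :
    ∃ C₃ > 0, ∃ C₄ > 0, ∃ x₀ : ℝ, ∀ x ≥ x₀,
      C₃ / (Real.log x * (Real.log (Real.log x)) ^ (k - 1))
        ≤ deriv uT x / (uT x - uT (x - γ))
      ∧ deriv uT x / (uT x - uT (x - γ))
        ≤ C₄ / (Real.log x * (Real.log (Real.log x)) ^ (k - 1)) := by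
  have hk0 : (0:ℝ) < k := lt_of_lt_of_le one_pos hk
  have h2bT : ∀ r, 2 * bT r
      = (1/γ) * Real.log (Real.log r) + (k/γ) * Real.log (Real.log (Real.log r)) := by
    intro r; rw [hbT]; field_simp
  have hfII : ∀ a b : ℝ, IntervalIntegrable (fun r => 2 * bT r) volume a b := by
    intro a b
    have he : (fun r => 2 * bT r) = fun r =>
        (1/γ) * Real.log (Real.log r) + (k/γ) * Real.log (Real.log (Real.log r)) := funext h2bT
    rw [he]
    exact ((my_II_LL a b).const_mul _).add ((my_II_LLL a b).const_mul _)
  set g : ℝ → ℝ := fun y => Real.exp (-(∫ r in z₀..y, 2 * bT r)) with hgdef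
  have hgc : Continuous g :=
    Real.continuous_exp.comp (intervalIntegral.continuous_primitive hfII z₀).neg
  have hgpos : ∀ y, 0 < g y := fun y => Real.exp_pos _
  have huTf : uT = fun t => ∫ y in z₀..t, g y := funext huT
  -- monotonicity of the drift
  have hfmono : ∀ r s : ℝ, 3 ≤ r → r ≤ s → 2 * bT r ≤ 2 * bT s := by
    intro r s h3 hrs
    have hr0 : (0:ℝ) < r := by linarith
    have hs0 : (0:ℝ) < s := by linarith
    have hlr : 1 < Real.log r := by
      rw [Real.lt_log_iff_exp_lt hr0]
      have := Real.exp_one_lt_d9; norm_num at this; linarith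
    have hlog : Real.log r ≤ Real.log s := (Real.log_le_log_iff hr0 hs0).2 hrs
    have hls : 1 < Real.log s := lt_of_lt_of_le hlr hlog
    have hllog : Real.log (Real.log r) ≤ Real.log (Real.log s) :=
      (Real.log_le_log_iff (by linarith) (by linarith)).2 hlog
    have hllr : 0 < Real.log (Real.log r) := Real.log_pos hlr
    have hlllog : Real.log (Real.log (Real.log r)) ≤ Real.log (Real.log (Real.log s)) :=
      (Real.log_le_log_iff hllr (lt_of_lt_of_le hllr hllog)).2 hllog
    rw [h2bT r, h2bT s]
    have c1 : (0:ℝ) ≤ 1/γ := by positivity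
    have c2 : (0:ℝ) ≤ k/γ := by positivity
    exact add_le_add (mul_le_mul_of_nonneg_left hllog c1)
      (mul_le_mul_of_nonneg_left hlllog c2)
  set c5 : ℝ := (1/2) * (1/2 : ℝ) ^ (k:ℝ) with hc5def
  have hc5 : 0 < c5 := by
    have := Real.rpow_pos_of_pos (show (0:ℝ) < 1/2 by norm_num) k
    rw [hc5def]; positivity
  refine ⟨1/γ, by positivity, 4/(c5*γ), by positivity, ?_⟩
  -- eventual conditions
  have t1 : Tendsto Real.log atTop atTop := Real.tendsto_log_atTop
  have t2 : Tendsto (fun x => Real.log (Real.log x)) atTop atTop := t1.comp t1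
  have e5 : ∀ᶠ t : ℝ in atTop, k * Real.log t ≤ t := by
    have h := Real.isLittleO_log_id_atTop.def (show (0:ℝ) < 1/k by positivity)
    filter_upwards [h, eventually_ge_atTop (0:ℝ)] with t ht ht0
    have hht : |Real.log t| ≤ (1/k) * |t| := by simpa [Real.norm_eq_abs] using ht
    have h1 : k * Real.log t ≤ k * |Real.log t| :=
      mul_le_mul_of_nonneg_left (le_abs_self _) hk0.le
    have h3 : k * |Real.log t| ≤ k * ((1/k) * |t|) := mul_le_mul_of_nonneg_left hht hk0.le
    have h2 : k * ((1/k) * |t|) = |t| := by field_simp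
    have h4 : k * Real.log t ≤ |t| := by linarith
    rwa [abs_of_nonneg ht0] at h4
  have hev : ∀ᶠ x : ℝ in atTop, (γ + 3 ≤ x ∧ 2*γ ≤ x) ∧ (2 ≤ Real.log x
      ∧ 2 ≤ Real.log (Real.log x))
      ∧ k * Real.log (Real.log (Real.log x)) ≤ Real.log (Real.log x) := by
    filter_upwards [eventually_ge_atTop (γ+3), eventually_ge_atTop (2*γ),
      t1.eventually_ge_atTop 2, t2.eventually_ge_atTop 2, t2.eventually e5]
      with x h1 h2 h3 h4 h5
    exact ⟨⟨h1, h2⟩, ⟨h3, h4⟩, h5⟩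
  obtain ⟨x₀, hx₀⟩ := eventually_atTop.1 hev
  refine ⟨x₀, fun x hx => ?_⟩
  obtain ⟨⟨hb1, hb2⟩, ⟨hb3, hb4⟩, hb5⟩ := hx₀ x hx
  -- basic positivity at x and x - γ
  have hx3 : 3 ≤ x - γ := by linarith
  have hxpos : (0:ℝ) < x := by linarith
  have hxg : (0:ℝ) < x - γ := by linarith
  have hl1 : 0 < Real.log x := by linarith
  have hl2pos : 0 < Real.log (Real.log x) := by linarith
  have hl3 : 0 ≤ Real.log (Real.log (Real.log x)) := Real.log_nonneg (by linarith)
  have hlog2 : Real.log 2 ≤ 1 := by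
    have := Real.log_le_sub_one_of_pos (show (0:ℝ) < 2 by norm_num); linarith
  have hl1' : 0 < Real.log (x - γ) := Real.log_pos (by linarith)
  have hl1'lb : Real.log x / 2 ≤ Real.log (x - γ) := by
    have h1 : Real.log (x/2) ≤ Real.log (x - γ) :=
      (Real.log_le_log_iff (by positivity) hxg).2 (by linarith)
    have h2 : Real.log (x/2) = Real.log x - Real.log 2 :=
      Real.log_div (ne_of_gt hxpos) two_ne_zero
    linarith
  have hl2'lb : Real.log (Real.log x) / 2 ≤ Real.log (Real.log (x - γ)) := by
    have h1 : Real.log (Real.log x / 2) ≤ Real.log (Real.log (x - γ)) :=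
      (Real.log_le_log_iff (by positivity) (by linarith)).2 hl1'lb
    have h2 : Real.log (Real.log x / 2) = Real.log (Real.log x) - Real.log 2 :=
      Real.log_div (ne_of_gt hl1) two_ne_zero
    linarith
  have hl2'1 : 1 ≤ Real.log (Real.log (x - γ)) := by linarith
  have hl3' : 0 ≤ Real.log (Real.log (Real.log (x - γ))) := Real.log_nonneg hl2'1
  -- M and m
  set M : ℝ := 2 * bT x with hMdef
  set m : ℝ := 2 * bT (x - γ) with hmdef
  have hMeq : γ * M = Real.log (Real.log x) + k * Real.log (Real.log (Real.log x)) := by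
    rw [hMdef, h2bT]; field_simp
  have hmeq : γ * m = Real.log (Real.log (x - γ))
      + k * Real.log (Real.log (Real.log (x - γ))) := by
    rw [hmdef, h2bT]; field_simp
  have hkl3 : 0 ≤ k * Real.log (Real.log (Real.log x)) := mul_nonneg hk0.le hl3
  have hkl3' : 0 ≤ k * Real.log (Real.log (Real.log (x - γ))) := mul_nonneg hk0.le hl3'
  have hM_pos : 0 < M := by nlinarith
  have hm_pos : 0 < m := by nlinarith
  have hmM : m ≤ M := hfmono (x - γ) x hx3 (by linarith)
  have hMub : γ * M ≤ 2 * Real.log (Real.log x) := by rw [hMeq]; linarith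
  have hMlb : Real.log (Real.log x) ≤ γ * M := by rw [hMeq]; linarith
  have hγm1 : 1 ≤ γ * m := by rw [hmeq]; linarith
  -- exp identities
  have hexpM : Real.exp (M * γ) = Real.log x * (Real.log (Real.log x)) ^ (k:ℝ) := by
    have hrp : Real.exp (k * Real.log (Real.log (Real.log x)))
        = (Real.log (Real.log x)) ^ (k:ℝ) := by
      rw [Real.rpow_def_of_pos hl2pos, mul_comm]
    rw [mul_comm, hMeq, Real.exp_add, Real.exp_log hl1, hrp]
  have hexpm : Real.exp (m * γ) = Real.log (x - γ)
      * (Real.log (Real.log (x - γ))) ^ (k:ℝ) := by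
    have hrp : Real.exp (k * Real.log (Real.log (Real.log (x - γ))))
        = (Real.log (Real.log (x - γ))) ^ (k:ℝ) := by
      rw [Real.rpow_def_of_pos (by linarith), mul_comm]
    rw [mul_comm, hmeq, Real.exp_add, Real.exp_log hl1', hrp]
  -- derivative and difference
  have hderiv : deriv uT x = g x := by
    rw [huTf]; exact Continuous.deriv_integral g hgc z₀ x
  have hdiff : uT x - uT (x - γ) = ∫ y in x-γ..x, g y := by
    simp only [huTf]
    exact integral_interval_sub_left (hgc.intervalIntegrable z₀ x)
      (hgc.intervalIntegrable z₀ (x - γ))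
  have hEc : Continuous fun y => ∫ r in y..x, 2 * bT r := by
    have h := (intervalIntegral.continuous_primitive hfII x).neg
    have he : (fun y => ∫ r in y..x, 2 * bT r) = fun y => -∫ r in x..y, 2 * bT r :=
      funext fun y => intervalIntegral.integral_symm x y
    rw [he]; exact h
  have hsplit : ∀ y, g y = g x * Real.exp (∫ r in y..x, 2 * bT r) := by
    intro y
    rw [hgdef]
    simp only
    rw [← Real.exp_add]
    congr 1
    have h := integral_add_adjacent_intervals (hfII z₀ y) (hfII y x)
    linarith
  set J : ℝ := ∫ y in x-γ..x, Real.exp (∫ r in y..x, 2 * bT r) with hJdef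
  have hJeq : (∫ y in x-γ..x, g y) = g x * J := by
    rw [hJdef]
    rw [show (∫ y in x-γ..x, g y)
        = ∫ y in x-γ..x, g x * Real.exp (∫ r in y..x, 2 * bT r) from
      intervalIntegral.integral_congr (fun y _ => hsplit y)]
    exact intervalIntegral.integral_const_mul _ _
  -- pointwise bounds on the exponent
  have hfub : ∀ y ∈ Icc (x-γ) x, (∫ r in y..x, 2 * bT r) ≤ M * (x - y) := by
    intro y hy
    have h1 : (∫ r in y..x, 2 * bT r) ≤ ∫ _r in y..x, M :=
      integral_mono_on hy.2 (hfII y x) intervalIntegrable_const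
        (fun r hr => hfmono r x (by linarith [hy.1, hr.1]) hr.2)
    rw [intervalIntegral.integral_const, smul_eq_mul] at h1
    linarith
  have hflb : ∀ y ∈ Icc (x-γ) x, m * (x - y) ≤ ∫ r in y..x, 2 * bT r := by
    intro y hy
    have h1 : (∫ _r in y..x, m) ≤ ∫ r in y..x, 2 * bT r :=
      integral_mono_on hy.2 intervalIntegrable_const (hfII y x)
        (fun r hr => hfmono (x - γ) r hx3 (by linarith [hy.1, hr.1]))
    rw [intervalIntegral.integral_const, smul_eq_mul] at h1
    linarith
  -- exact value of comparison integrals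
  have hcomp : ∀ c : ℝ, c ≠ 0 →
      (∫ y in x-γ..x, Real.exp (c * (x - y))) = (Real.exp (c * γ) - 1) / c := by
    intro c hc
    have h1 : (∫ y in x-γ..x, Real.exp (c * (x - y)))
        = ∫ u in x - x..x - (x - γ), Real.exp (c * u) :=
      integral_comp_sub_left (fun u => Real.exp (c * u)) x
    rw [h1]
    simp only [sub_self, sub_sub_cancel]
    rw [integral_comp_mul_left (fun u => Real.exp u) hc, mul_zero, integral_exp,
      Real.exp_zero, smul_eq_mul]
    ring
  have hJub : J ≤ (Real.exp (M * γ) - 1) / M := by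
    have h1 : J ≤ ∫ y in x-γ..x, Real.exp (M * (x - y)) := by
      apply integral_mono_on (by linarith : x - γ ≤ x)
      · exact (Real.continuous_exp.comp hEc).intervalIntegrable _ _
      · exact (Real.continuous_exp.comp
          (continuous_const.mul (continuous_const.sub continuous_id))).intervalIntegrable _ _
      · intro y hy; exact Real.exp_le_exp.2 (hfub y hy)
    rwa [hcomp M hM_pos.ne'] at h1
  have hJlb : (Real.exp (m * γ) - 1) / m ≤ J := by
    have h1 : (∫ y in x-γ..x, Real.exp (m * (x - y))) ≤ J := by
      apply integral_mono_on (by linarith : x - γ ≤ x)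
      · exact (Real.continuous_exp.comp
          (continuous_const.mul (continuous_const.sub continuous_id))).intervalIntegrable _ _
      · exact (Real.continuous_exp.comp hEc).intervalIntegrable _ _
      · intro y hy; exact Real.exp_le_exp.2 (hflb y hy)
    rwa [hcomp m hm_pos.ne'] at h1
  have hexp2 : 2 ≤ Real.exp (m * γ) := by
    have h1 : (1:ℝ) ≤ m * γ := by rw [mul_comm]; exact hγm1
    have h2 := Real.exp_le_exp.2 h1
    have := Real.exp_one_gt_d9; norm_num at this; linarith
  have hJpos : 0 < J := lt_of_lt_of_le (div_pos (by linarith) hm_pos) hJlb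
  have hratio : deriv uT x / (uT x - uT (x - γ)) = 1 / J := by
    rw [hderiv, hdiff, hJeq, show g x / (g x * J) = g x * 1 / (g x * J) by rw [mul_one],
      mul_div_mul_left 1 J (hgpos x).ne']
  -- rpow bookkeeping
  have hl2ne : Real.log (Real.log x) ≠ 0 := hl2pos.ne'
  have hPk : (Real.log (Real.log x)) ^ (k - 1 : ℝ) * Real.log (Real.log x)
      = (Real.log (Real.log x)) ^ (k:ℝ) := by
    rw [Real.rpow_sub_one hl2ne]; field_simp
  have hPpos : 0 < Real.log x * (Real.log (Real.log x)) ^ (k - 1 : ℝ) := by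
    have := Real.rpow_pos_of_pos hl2pos (k - 1 : ℝ); positivity
  -- upper bound for J
  have hJub2 : J ≤ γ * (Real.log x * (Real.log (Real.log x)) ^ (k - 1 : ℝ)) := by
    have h1 : J ≤ Real.exp (M * γ) / M := by
      apply hJub.trans
      apply div_le_div_of_nonneg_right ?_ hM_pos.le
      linarith [Real.exp_pos (M * γ)]
    have hnum : 0 ≤ Real.log x * (Real.log (Real.log x)) ^ (k:ℝ) := by
      have := Real.rpow_pos_of_pos hl2pos (k:ℝ); positivity
    have h2 : Real.exp (M * γ) / M
        ≤ γ * (Real.log x * (Real.log (Real.log x)) ^ (k - 1 : ℝ)) := by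
      rw [hexpM, div_le_iff₀ hM_pos]
      have hgoal : γ * (Real.log x * (Real.log (Real.log x)) ^ (k - 1 : ℝ)) * M
          = (Real.log x * (Real.log (Real.log x)) ^ (k - 1 : ℝ)) * (γ * M) := by ring
      rw [hgoal]
      calc Real.log x * Real.log (Real.log x) ^ (k:ℝ)
          = (Real.log x * (Real.log (Real.log x)) ^ (k - 1 : ℝ)) * Real.log (Real.log x) := by
            rw [mul_assoc, hPk]
        _ ≤ (Real.log x * (Real.log (Real.log x)) ^ (k - 1 : ℝ)) * (γ * M) :=
            mul_le_mul_of_nonneg_left hMlb hPpos.le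
    exact h1.trans h2
  -- lower bound for J
  have hexpm_lb : c5 * (Real.log x * (Real.log (Real.log x)) ^ (k:ℝ))
      ≤ Real.exp (m * γ) := by
    rw [hexpm]
    have h1 : (Real.log (Real.log x) / 2) ^ (k:ℝ)
        ≤ (Real.log (Real.log (x - γ))) ^ (k:ℝ) :=
      Real.rpow_le_rpow (by positivity) hl2'lb hk0.le
    have h2 : (Real.log (Real.log x) / 2) ^ (k:ℝ)
        = (1/2:ℝ) ^ (k:ℝ) * (Real.log (Real.log x)) ^ (k:ℝ) := by
      rw [show Real.log (Real.log x) / 2 = (1/2) * Real.log (Real.log x) by ring,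
        Real.mul_rpow (by norm_num) hl2pos.le]
    have h3 : 0 ≤ (1/2:ℝ) ^ (k:ℝ) * (Real.log (Real.log x)) ^ (k:ℝ) := by
      have := Real.rpow_pos_of_pos (show (0:ℝ) < 1/2 by norm_num) (k:ℝ)
      have := Real.rpow_pos_of_pos hl2pos (k:ℝ)
      positivity
    have h4 : c5 * (Real.log x * (Real.log (Real.log x)) ^ (k:ℝ))
        = (Real.log x / 2) * ((1/2:ℝ) ^ (k:ℝ) * (Real.log (Real.log x)) ^ (k:ℝ)) := by
      rw [hc5def]; ring
    rw [h4]
    apply mul_le_mul hl1'lb (h2 ▸ h1) h3 hl1'.le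
  have hJlb2 : (c5 * γ / 4) * (Real.log x * (Real.log (Real.log x)) ^ (k - 1 : ℝ)) ≤ J := by
    refine le_trans ?_ hJlb
    rw [le_div_iff₀ hm_pos]
    have hγm2 : γ * m ≤ 2 * Real.log (Real.log x) := le_trans
      (by nlinarith : γ * m ≤ γ * M) hMub
    have step1 : (c5 * γ / 4) * (Real.log x * (Real.log (Real.log x)) ^ (k - 1 : ℝ)) * m
        = (c5 / 4) * (Real.log x * (Real.log (Real.log x)) ^ (k - 1 : ℝ)) * (γ * m) := by
      ring
    have step2 : (c5 / 4) * (Real.log x * (Real.log (Real.log x)) ^ (k - 1 : ℝ)) * (γ * m)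
        ≤ (c5 / 4) * (Real.log x * (Real.log (Real.log x)) ^ (k - 1 : ℝ))
          * (2 * Real.log (Real.log x)) := by
      apply mul_le_mul_of_nonneg_left hγm2
      positivity
    have step3 : (c5 / 4) * (Real.log x * (Real.log (Real.log x)) ^ (k - 1 : ℝ))
          * (2 * Real.log (Real.log x))
        = (c5 / 2) * (Real.log x * (Real.log (Real.log x)) ^ (k:ℝ)) := by
      rw [← hPk]; ring
    have hfin : (c5 / 2) * (Real.log x * (Real.log (Real.log x)) ^ (k:ℝ))
        ≤ Real.exp (m * γ) - 1 := by linarith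
    linarith
  -- conclude
  rw [hratio]
  constructor
  · have h1 : 1 / (γ * (Real.log x * (Real.log (Real.log x)) ^ (k - 1 : ℝ))) ≤ 1 / J :=
      one_div_le_one_div_of_le hJpos hJub2
    have h2 : 1 / γ / (Real.log x * (Real.log (Real.log x)) ^ (k - 1 : ℝ))
        = 1 / (γ * (Real.log x * (Real.log (Real.log x)) ^ (k - 1 : ℝ))) := div_div 1 γ _
    rw [h2]; exact h1
  · have hc5γP : 0 < (c5 * γ / 4) * (Real.log x * (Real.log (Real.log x)) ^ (k - 1 : ℝ)) := by
      positivity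
    have h1 : 1 / J
        ≤ 1 / ((c5 * γ / 4) * (Real.log x * (Real.log (Real.log x)) ^ (k - 1 : ℝ))) :=
      one_div_le_one_div_of_le hc5γP hJlb2
    have hPne : Real.log x * (Real.log (Real.log x)) ^ (k - 1 : ℝ) ≠ 0 := hPpos.ne'
    have hcγ : c5 * γ ≠ 0 := by positivity
    have h2 : 1 / ((c5 * γ / 4) * (Real.log x * (Real.log (Real.log x)) ^ (k - 1 : ℝ)))
        = 4 / (c5 * γ) / (Real.log x * (Real.log (Real.log x)) ^ (k - 1 : ℝ)) := by
      field_simp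
    exact h1.trans_eq h2
end

section
/- Let C₃, M > 0 and suppose a sequence (x_n)_{n≥1} of positive reals with partial sums s_n = x₀ + ∑_{j=1}^n x_j (x₀ > e fixed, large) satisfies C₃·x_n / log s_n = 2·log(n + M) for all n ≥ 1. Then there exists C > 0 such that s_n ≤ C·(n + M)·(log(n + M))² for all n ≥ 1. -/
open Real Finset

set_option maxHeartbeats 1000000 in
/-- Growth upper bound for the difference equation `C₃ xₙ / log sₙ = 2 log(n + M)`:
the partial sums satisfy `sₙ ≤ C (n+M) (log(n+M))²`. -/
theorem stmt_6 (C₃ M : ℝ) (hC₃ : 0 < C₃) (hM : 0 < M)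
    (x : ℕ → ℝ) (hx0 : Real.exp 1 < x 0) (hxpos : ∀ n, 1 ≤ n → 0 < x n)
    (s : ℕ → ℝ) (hs : ∀ n, s n = x 0 + ∑ j ∈ Finset.Icc 1 n, x j)
    (hrec : ∀ n : ℕ, 1 ≤ n → C₃ * x n / Real.log (s n) = 2 * Real.log (n + M)) :
    ∃ C > 0, ∀ n : ℕ, 1 ≤ n → s n ≤ C * (n + M) * (Real.log (n + M)) ^ 2 := by
  have hM1 : (1:ℝ) < 1 + M := by linarith
  have hlogM : 0 < Real.log (1 + M) := Real.log_pos hM1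
  have hx0pos : (0:ℝ) < x 0 := lt_trans (Real.exp_pos 1) hx0
  have hsge : ∀ n, x 0 ≤ s n := by
    intro n
    rw [hs]
    have h : 0 ≤ ∑ j ∈ Finset.Icc 1 n, x j :=
      Finset.sum_nonneg (fun j hj => le_of_lt (hxpos j (Finset.mem_Icc.mp hj).1))
    linarith
  have hse : ∀ n, Real.exp 1 < s n := fun n => lt_of_lt_of_le hx0 (hsge n)
  have hspos : ∀ n, 0 < s n := fun n => lt_trans (Real.exp_pos 1) (hse n)
  have hlogs1 : ∀ n, 1 < Real.log (s n) := by
    intro n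
    have h := Real.log_lt_log (Real.exp_pos 1) (hse n)
    rwa [Real.log_exp] at h
  have hlogspos : ∀ n, 0 < Real.log (s n) := fun n => lt_trans one_pos (hlogs1 n)
  have hxn : ∀ n : ℕ, 1 ≤ n → x n = 2 * Real.log ((n:ℝ) + M) * Real.log (s n) / C₃ := by
    intro n hn
    have h := hrec n hn
    rw [div_eq_iff (ne_of_gt (hlogspos n))] at h
    field_simp
    linarith
  have hdiff : ∀ n : ℕ, s (n+1) = s n + x (n+1) := by
    intro n
    rw [hs, hs, Finset.sum_Icc_succ_top (Nat.succ_le_succ (Nat.zero_le n))]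
    ring
  have hlog_sqrt : ∀ y : ℝ, 0 < y → Real.log y ≤ 2 * Real.sqrt y := by
    intro y hy
    have h1 : Real.log y = 2 * Real.log (Real.sqrt y) := by
      rw [Real.log_sqrt hy.le]; ring
    have h2 : Real.log (Real.sqrt y) ≤ Real.sqrt y - 1 :=
      Real.log_le_sub_one_of_pos (Real.sqrt_pos.mpr hy)
    nlinarith [Real.sqrt_nonneg y]
  -- key dichotomy
  have key : ∀ n : ℕ, ((n:ℝ)+1) * s (n+1) ≤ ((n:ℝ)+2) * s n ∨
      s (n+1) ≤ 256*(1+M)/C₃^2 * ((n:ℝ)+1)^3 := by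
    intro n
    have hn1 : (1:ℕ) ≤ n+1 := Nat.succ_le_succ (Nat.zero_le n)
    have hncast : (0:ℝ) ≤ (n:ℝ) := Nat.cast_nonneg n
    set c : ℝ := 2 * Real.log ((n:ℝ)+1+M) / C₃ with hc
    have hlogn1 : 0 < Real.log ((n:ℝ)+1+M) := Real.log_pos (by linarith)
    have hcpos : 0 < c := div_pos (by linarith) hC₃
    set L := Real.log (s (n+1)) with hL
    have hLpos : 0 < L := hlogspos (n+1)
    have hxe : x (n+1) = c * L := by
      have h := hxn (n+1) hn1
      push_cast at h
      rw [h, hc, hL]; ring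
    have hd : s (n+1) = s n + c * L := by rw [hdiff n, hxe]
    by_cases hcase : ((n:ℝ)+1) * (c*L) ≤ s n
    · left
      nlinarith [hspos n]
    · right
      push_neg at hcase
      have hcL : 0 < c * L := mul_pos hcpos hLpos
      have h2 : s (n+1) ≤ 2*((n:ℝ)+1) * (c*L) := by nlinarith
      have h3 : L ≤ 2 * Real.sqrt (s (n+1)) := hlog_sqrt _ (hspos (n+1))
      set u := Real.sqrt (s (n+1)) with hu
      have hu2 : u^2 = s (n+1) := Real.sq_sqrt (hspos (n+1)).le
      have hupos : 0 < u := Real.sqrt_pos.mpr (hspos (n+1))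
      have h4 : u ≤ 4*((n:ℝ)+1)*c := by nlinarith
      have h5 : s (n+1) ≤ 16*((n:ℝ)+1)^2*c^2 := by nlinarith
      have hlsq : Real.log ((n:ℝ)+1+M) ≤ 2 * Real.sqrt ((n:ℝ)+1+M) :=
        hlog_sqrt _ (by linarith)
      have hsq2 : (Real.sqrt ((n:ℝ)+1+M))^2 = (n:ℝ)+1+M := Real.sq_sqrt (by linarith)
      have hlsq2 : (Real.log ((n:ℝ)+1+M))^2 ≤ 4*((n:ℝ)+1+M) := by
        nlinarith [Real.sqrt_nonneg ((n:ℝ)+1+M)]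
      have hbd : (n:ℝ)+1+M ≤ (1+M)*((n:ℝ)+1) := by nlinarith
      have hcC : c * C₃ = 2 * Real.log ((n:ℝ)+1+M) := by
        rw [hc]; field_simp
      have hc2 : c^2 * C₃^2 ≤ 16*(1+M)*((n:ℝ)+1) := by
        have h8 : c^2 * C₃^2 = 4 * (Real.log ((n:ℝ)+1+M))^2 := by
          rw [show c^2*C₃^2 = (c*C₃)^2 from by ring, hcC]; ring
        linarith
      rw [div_mul_eq_mul_div, le_div_iff₀ (by positivity : (0:ℝ) < C₃^2)]
      have h6 : s (n+1) * C₃^2 ≤ 16*((n:ℝ)+1)^2*(c^2*C₃^2) := by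
        calc s (n+1) * C₃^2 ≤ (16*((n:ℝ)+1)^2*c^2) * C₃^2 :=
              mul_le_mul_of_nonneg_right h5 (sq_nonneg C₃)
          _ = 16*((n:ℝ)+1)^2*(c^2*C₃^2) := by ring
      have h7 : 16*((n:ℝ)+1)^2*(c^2*C₃^2) ≤ 16*((n:ℝ)+1)^2*(16*(1+M)*((n:ℝ)+1)) :=
        mul_le_mul_of_nonneg_left hc2 (by positivity)
      calc s (n+1) * C₃^2 ≤ 16*((n:ℝ)+1)^2*(16*(1+M)*((n:ℝ)+1)) := le_trans h6 h7
        _ = 256*(1+M)*((n:ℝ)+1)^3 := by ring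
  -- Stage 1: cubic bound
  set A : ℝ := max 1 (max (2 * x 0) (256*(1+M)/C₃^2)) with hA
  have hA1 : (1:ℝ) ≤ A := le_max_left _ _
  have hA2 : 2 * x 0 ≤ A := le_trans (le_max_left _ _) (le_max_right _ _)
  have hA3 : 256*(1+M)/C₃^2 ≤ A := le_trans (le_max_right _ _) (le_max_right _ _)
  have hA0 : (0:ℝ) ≤ A := by linarith
  have hs0 : s 0 = x 0 := by rw [hs]; simp
  have bound1 : ∀ n : ℕ, 1 ≤ n → s n ≤ A * (n:ℝ)^3 := by
    intro n hn
    induction n, hn using Nat.le_induction with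
    | base =>
      rcases key 0 with h | h
      · push_cast at h
        rw [hs0] at h
        push_cast
        nlinarith
      · push_cast at h ⊢
        nlinarith
    | succ n hn ih =>
      rcases key n with h | h
      · have hncast : (1:ℝ) ≤ (n:ℝ) := by exact_mod_cast hn
        push_cast
        have h2 : ((n:ℝ)+2) * s n ≤ ((n:ℝ)+2) * (A * (n:ℝ)^3) :=
          mul_le_mul_of_nonneg_left ih (by linarith)
        have hp : ((n:ℝ)+2)*(n:ℝ)^3 ≤ ((n:ℝ)+1)^4 := by
          nlinarith [pow_nonneg (show (0:ℝ) ≤ (n:ℝ) by linarith) 3, sq_nonneg (n:ℝ),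
            mul_nonneg (sq_nonneg (n:ℝ)) (show (0:ℝ) ≤ (n:ℝ) by linarith)]
        have h3 : ((n:ℝ)+2)*(A*(n:ℝ)^3) ≤ A*((n:ℝ)+1)^4 := by
          calc ((n:ℝ)+2)*(A*(n:ℝ)^3) = A * (((n:ℝ)+2)*(n:ℝ)^3) := by ring
            _ ≤ A * ((n:ℝ)+1)^4 := mul_le_mul_of_nonneg_left hp hA0
        have h5 : ((n:ℝ)+1) * s (n+1) ≤ ((n:ℝ)+1) * (A*((n:ℝ)+1)^3) := by
          have he : ((n:ℝ)+1)*(A*((n:ℝ)+1)^3) = A*((n:ℝ)+1)^4 := by ring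
          linarith
        exact le_of_mul_le_mul_left h5 (by positivity)
      · push_cast
        have hncast : (0:ℝ) ≤ (n:ℝ) := Nat.cast_nonneg n
        have h2 : 256*(1+M)/C₃^2 * ((n:ℝ)+1)^3 ≤ A * ((n:ℝ)+1)^3 :=
          mul_le_mul_of_nonneg_right hA3 (by positivity)
        linarith
  -- Stage 2: log bound
  set K : ℝ := Real.log A / Real.log (1+M) + 3 with hK
  have hlogA : 0 ≤ Real.log A := Real.log_nonneg hA1
  have hKpos : 0 < K := by positivity
  have hlogs_le : ∀ n : ℕ, 1 ≤ n → Real.log (s n) ≤ K * Real.log ((n:ℝ) + M) := by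
    intro n hn
    have hncast : (1:ℝ) ≤ (n:ℝ) := by exact_mod_cast hn
    have h1 : Real.log (s n) ≤ Real.log (A * (n:ℝ)^3) :=
      Real.log_le_log (hspos n) (bound1 n hn)
    have hApos : (0:ℝ) < A := by linarith
    have hnpos : (0:ℝ) < (n:ℝ) := by linarith
    rw [Real.log_mul (ne_of_gt hApos) (by positivity), Real.log_pow] at h1
    have h2 : Real.log (n:ℝ) ≤ Real.log ((n:ℝ) + M) :=
      Real.log_le_log hnpos (by linarith)
    have h3 : Real.log (1+M) ≤ Real.log ((n:ℝ) + M) :=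
      Real.log_le_log (by linarith) (by linarith)
    have h4 : Real.log A ≤ Real.log A / Real.log (1+M) * Real.log ((n:ℝ)+M) := by
      rw [div_mul_eq_mul_div, le_div_iff₀ hlogM]
      nlinarith
    rw [hK]
    push_cast at h1
    nlinarith
  -- Stage 3
  have hm : (0:ℝ) < (1+M) * Real.log (1+M)^2 := by positivity
  refine ⟨x 0 / ((1+M) * Real.log (1+M)^2) + 2*K/C₃, by positivity, ?_⟩
  intro n hn
  have hncast : (1:ℝ) ≤ (n:ℝ) := by exact_mod_cast hn
  have hlognM : 0 < Real.log ((n:ℝ) + M) := Real.log_pos (by linarith)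
  have hsum : ∑ j ∈ Finset.Icc 1 n, x j ≤ (n:ℝ) * (2*K/C₃ * Real.log ((n:ℝ)+M)^2) := by
    have h := Finset.sum_le_card_nsmul (Finset.Icc 1 n) x (2*K/C₃ * Real.log ((n:ℝ)+M)^2) (by
      intro j hj
      obtain ⟨hj1, hj2⟩ := Finset.mem_Icc.mp hj
      have hjcast : (1:ℝ) ≤ (j:ℝ) := by exact_mod_cast hj1
      have hjn : (j:ℝ) ≤ (n:ℝ) := by exact_mod_cast hj2
      have hlogjM : 0 < Real.log ((j:ℝ) + M) := Real.log_pos (by linarith)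
      have hmono : Real.log ((j:ℝ) + M) ≤ Real.log ((n:ℝ) + M) :=
        Real.log_le_log (by linarith) (by linarith)
      have hxj := hxn j hj1
      have hlj := hlogs_le j hj1
      have ha : 2*Real.log ((j:ℝ)+M)*Real.log (s j) ≤
          2*Real.log ((j:ℝ)+M)*(K*Real.log ((j:ℝ)+M)) := by
        have := mul_le_mul_of_nonneg_left hlj (by positivity : (0:ℝ) ≤ 2*Real.log ((j:ℝ)+M))
        linarith
      have hb : K*(Real.log ((j:ℝ)+M))^2 ≤ K*(Real.log ((n:ℝ)+M))^2 := by
        apply mul_le_mul_of_nonneg_left _ hKpos.le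
        nlinarith
      have he : (2*K/C₃ * Real.log ((n:ℝ)+M)^2) * C₃ = 2*(K*Real.log ((n:ℝ)+M)^2) := by
        field_simp
      rw [hxj, div_le_iff₀ hC₃, he]
      nlinarith [ha, hb])
    rw [Nat.card_Icc] at h
    simp only [nsmul_eq_mul] at h
    calc ∑ j ∈ Finset.Icc 1 n, x j ≤ ((n + 1 - 1 : ℕ):ℝ) * (2*K/C₃ * Real.log ((n:ℝ)+M)^2) := h
      _ = (n:ℝ) * (2*K/C₃ * Real.log ((n:ℝ)+M)^2) := by norm_num
  have hbase : (1+M) * Real.log (1+M)^2 ≤ ((n:ℝ)+M) * Real.log ((n:ℝ)+M)^2 := by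
    have h3 : Real.log (1+M) ≤ Real.log ((n:ℝ) + M) :=
      Real.log_le_log (by linarith) (by linarith)
    have h4 : Real.log (1+M)^2 ≤ Real.log ((n:ℝ)+M)^2 := by nlinarith
    have := mul_le_mul (show (1+M:ℝ) ≤ (n:ℝ)+M by linarith) h4 (by positivity)
      (by linarith)
    linarith
  have hx0le : x 0 ≤ x 0 / ((1+M) * Real.log (1+M)^2) * (((n:ℝ)+M) * Real.log ((n:ℝ)+M)^2) := by
    rw [div_mul_eq_mul_div, le_div_iff₀ hm]
    nlinarith
  have hsn := hs n
  have hKC : 0 ≤ 2*K/C₃ := by positivity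
  have hmain : s n ≤ x 0 + (n:ℝ) * (2*K/C₃ * Real.log ((n:ℝ)+M)^2) := by
    rw [hsn]; linarith
  have hfin : (n:ℝ) * (2*K/C₃ * Real.log ((n:ℝ)+M)^2) ≤
      ((n:ℝ)+M) * (2*K/C₃ * Real.log ((n:ℝ)+M)^2) :=
    mul_le_mul_of_nonneg_right (by linarith) (by positivity)
  nlinarith [hx0le, hfin, hmain]
end

section
/- Let C₄ > 0, k > 1, and suppose a sequence (x_n)_{n≥0} of positive reals with x₀ > e and partial sums s_n = ∑_{j=0}^n x_j satisfies x_{n+1} = (log s_n)·(log log s_n)^{k−1} / C₄ for all n ≥ 0. Then there exists C > 0 such that s_n ≥ C·n·(log n)·(log log n)^{k−1} for all n ≥ 3. -/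
set_option maxHeartbeats 1000000

open Real Finset

/-- Growth lower bound for the difference equation
`x_{n+1} = (log sₙ)(log log sₙ)^{k−1}/C₄`, `k > 1`: the partial sums satisfy
`sₙ ≥ C n (log n)(log log n)^{k−1}`. -/
theorem stmt_7 (C₄ k : ℝ) (hC₄ : 0 < C₄) (hk : 1 < k)
    (x : ℕ → ℝ) (hx0 : Real.exp 1 < x 0) (hxpos : ∀ n, 0 < x n)
    (s : ℕ → ℝ) (hs : ∀ n, s n = ∑ j ∈ Finset.range (n + 1), x j)
    (hrec : ∀ n : ℕ, x (n + 1) = Real.log (s n) * (Real.log (Real.log (s n))) ^ (k - 1) / C₄) :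
    ∃ C > 0, ∀ n : ℕ, 3 ≤ n →
      C * n * Real.log n * (Real.log (Real.log n)) ^ (k - 1) ≤ s n := by
  have he2 : (2:ℝ) < Real.exp 1 := by linarith [Real.exp_one_gt_d9]
  have he3 : Real.exp 1 < 3 := by linarith [Real.exp_one_lt_d9]
  have hk1 : (0:ℝ) ≤ k - 1 := by linarith
  have hs_succ : ∀ n, s (n+1) = s n + x (n+1) := by
    intro n; rw [hs (n+1), Finset.sum_range_succ, ← hs n]
  have hs0 : s 0 = x 0 := by rw [hs 0]; simp
  have hsmono : Monotone s := monotone_nat_of_le_succ fun n => by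
    rw [hs_succ n]; linarith [hxpos (n+1)]
  have hse : ∀ n, Real.exp 1 < s n := fun n => by
    calc Real.exp 1 < x 0 := hx0
    _ = s 0 := hs0.symm
    _ ≤ s n := hsmono (Nat.zero_le n)
  have hspos : ∀ n, 0 < s n := fun n => (Real.exp_pos 1).trans (hse n)
  have hlog1 : ∀ n, 1 < Real.log (s n) := fun n =>
    (Real.lt_log_iff_exp_lt (hspos n)).2 (hse n)
  have hllpos : ∀ n, 0 < Real.log (Real.log (s n)) := fun n => Real.log_pos (hlog1 n)
  have hxmono : ∀ i j : ℕ, i ≤ j → x (i+1) ≤ x (j+1) := by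
    intro i j hij
    rw [hrec i, hrec j]
    have h1 : Real.log (s i) ≤ Real.log (s j) := Real.log_le_log (hspos i) (hsmono hij)
    have h2 : Real.log (Real.log (s i)) ≤ Real.log (Real.log (s j)) :=
      Real.log_le_log (by linarith [hlog1 i]) h1
    have h3 : (Real.log (Real.log (s i)))^(k-1) ≤ (Real.log (Real.log (s j)))^(k-1) :=
      Real.rpow_le_rpow (hllpos i).le h2 hk1
    have h4 : (0:ℝ) ≤ (Real.log (Real.log (s i)))^(k-1) := Real.rpow_nonneg (hllpos i).le _
    have h5 : (0:ℝ) ≤ Real.log (s j) := by linarith [hlog1 j]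
    exact (div_le_div_iff_of_pos_right hC₄).2 (mul_le_mul h1 h3 h4 h5)
  have hlin : ∀ n : ℕ, x 0 + n * x 1 ≤ s n := by
    intro n; induction n with
    | zero => simp [hs0]
    | succ n ih =>
      rw [hs_succ n]
      have h := hxmono 0 n (Nat.zero_le n)
      push_cast
      push_cast at ih
      linarith
  have hhalf : ∀ m d : ℕ, s m + d * x (m+1) ≤ s (m+d) := by
    intro m d; induction d with
    | zero => simp
    | succ d ih =>
      have h1 : s (m + (d+1)) = s (m+d) + x (m+d+1) := hs_succ (m+d)
      have h2 := hxmono m (m+d) (Nat.le_add_right m d)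
      rw [h1]
      push_cast
      push_cast at ih
      linarith
  have hbpos : 0 < x 1 := hxpos 1
  set b := x 1 with hbdef
  set N : ℕ := max 55 ⌈9 / b^2⌉₊ with hNdef
  have hN55 : (55:ℝ) ≤ (N:ℝ) := by
    have h : (55:ℕ) ≤ N := le_max_left _ _
    exact_mod_cast h
  -- main estimate for n ≥ N
  have hmain : ∀ n : ℕ, N ≤ n →
      (1/4) * (1/2:ℝ)^(k-1) / C₄ * n * Real.log n * (Real.log (Real.log n))^(k-1) ≤ s n := by
    intro n hn
    have hn55 : (55:ℝ) ≤ (n:ℝ) := le_trans hN55 (by exact_mod_cast hn)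
    have hnb : 9 / b^2 ≤ (n:ℝ) := by
      refine le_trans (Nat.le_ceil _) ?_
      exact_mod_cast le_trans (le_max_right 55 ⌈9 / b^2⌉₊) hn
    have hnpos : (0:ℝ) < n := by linarith
    have hexp4 : Real.exp 4 ≤ 55 := by
      have h := Real.exp_one_lt_d9
      have h4 : Real.exp (4:ℝ) = Real.exp 1 ^ (4:ℕ) := by
        rw [Real.exp_one_pow]; norm_num
      have h4' : Real.exp 1 ^ (4:ℕ) ≤ (2.7182818286:ℝ)^(4:ℕ) :=
        pow_le_pow_left₀ (Real.exp_pos 1).le h.le 4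
      rw [h4]
      calc Real.exp 1 ^ (4:ℕ) ≤ (2.7182818286:ℝ)^(4:ℕ) := h4'
        _ ≤ 55 := by norm_num
    have hlogn4 : (4:ℝ) ≤ Real.log n := (Real.le_log_iff_exp_le hnpos).2 (by linarith)
    have hlog4 : Real.log 4 = 2 * Real.log 2 := by
      rw [show (4:ℝ) = 2^2 by norm_num, Real.log_pow]; push_cast; ring
    have hlln4 : Real.log 4 ≤ Real.log (Real.log n) :=
      Real.log_le_log (by norm_num) (by linarith)
    have hllnpos : 0 < Real.log (Real.log n) := by
      have h : (0:ℝ) < Real.log 4 := Real.log_pos (by norm_num)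
      linarith
    set m := n / 2 with hm
    have hm3 : (n:ℝ) ≤ 3 * (m:ℝ) := by
      have h : n ≤ 3 * (n/2) := by omega
      exact_mod_cast h
    have hnm : (n:ℝ)/2 ≤ ((n - m : ℕ):ℝ) := by
      have h : n ≤ 2 * (n - n/2) := by omega
      have h' : (n:ℝ) ≤ 2 * ((n - n/2 : ℕ):ℝ) := by exact_mod_cast h
      linarith
    have hsm1 : (n:ℝ)/3 * b ≤ s m := by
      have h := hlin m
      have hx0pos := hxpos 0
      have h' : (n:ℝ)/3 * b ≤ (m:ℝ) * b :=
        mul_le_mul_of_nonneg_right (by linarith) hbpos.le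
      linarith
    have hsqn : Real.sqrt n ≤ (n:ℝ)/3 * b := by
      have h1 : 3 / b ≤ Real.sqrt n := by
        have h0 : Real.sqrt ((3/b)^2) = 3/b := Real.sqrt_sq (by positivity)
        rw [← h0]
        apply Real.sqrt_le_sqrt
        have he : ((3:ℝ)/b)^2 = 9/b^2 := by ring
        linarith
      have h2 : 0 ≤ Real.sqrt n := Real.sqrt_nonneg n
      have h3 : Real.sqrt n * Real.sqrt n = n := Real.mul_self_sqrt hnpos.le
      have h4 : (3/b) * Real.sqrt n ≤ (n:ℝ) := by nlinarith
      calc Real.sqrt n = (b/3) * ((3/b) * Real.sqrt n) := by field_simp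
        _ ≤ (b/3) * n := mul_le_mul_of_nonneg_left h4 (by positivity)
        _ = (n:ℝ)/3 * b := by ring
    have hsm : Real.sqrt n ≤ s m := le_trans hsqn hsm1
    have hsqpos : 0 < Real.sqrt n := Real.sqrt_pos.2 hnpos
    have hlogsm : (1/2) * Real.log n ≤ Real.log (s m) := by
      have h := Real.log_le_log hsqpos hsm
      rw [Real.log_sqrt hnpos.le] at h
      linarith
    have hllsm : (1/2) * Real.log (Real.log n) ≤ Real.log (Real.log (s m)) := by
      have h1 : Real.log ((1/2) * Real.log n) ≤ Real.log (Real.log (s m)) :=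
        Real.log_le_log (by linarith) hlogsm
      have h2 : Real.log ((1/2) * Real.log n) = Real.log (Real.log n) - Real.log 2 := by
        rw [Real.log_mul (by norm_num) (by linarith)]
        rw [show (1/2:ℝ) = 2⁻¹ by norm_num, Real.log_inv]
        ring
      rw [h2] at h1
      rw [hlog4] at hlln4
      linarith
    have hxm1 : (1/2 * Real.log n) * ((1/2:ℝ)^(k-1) * (Real.log (Real.log n))^(k-1)) / C₄
        ≤ x (m+1) := by
      rw [hrec m]
      have hprod : (1/2:ℝ)^(k-1) * (Real.log (Real.log n))^(k-1)
          = ((1/2) * Real.log (Real.log n))^(k-1) := by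
        rw [Real.mul_rpow (by norm_num) hllnpos.le]
      rw [hprod]
      have hr : ((1/2) * Real.log (Real.log n))^(k-1) ≤ (Real.log (Real.log (s m)))^(k-1) :=
        Real.rpow_le_rpow (by positivity) hllsm hk1
      have hnn : (0:ℝ) ≤ ((1/2) * Real.log (Real.log n))^(k-1) :=
        Real.rpow_nonneg (by positivity) _
      exact (div_le_div_iff_of_pos_right hC₄).2
        (mul_le_mul hlogsm hr hnn (by linarith [hlog1 m]))
    have h0 : s m + ((n - m:ℕ):ℝ) * x (m+1) ≤ s n := by
      have h := hhalf m (n - m)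
      rwa [Nat.add_sub_cancel' (by omega : m ≤ n)] at h
    have hxm1pos : 0 < x (m+1) := hxpos (m+1)
    have hsmpos : 0 < s m := hspos m
    calc (1/4) * (1/2:ℝ)^(k-1) / C₄ * n * Real.log n * (Real.log (Real.log n))^(k-1)
        = ((n:ℝ)/2) * ((1/2 * Real.log n) * ((1/2:ℝ)^(k-1) * (Real.log (Real.log n))^(k-1)) / C₄) := by
          ring
      _ ≤ ((n:ℝ)/2) * x (m+1) := mul_le_mul_of_nonneg_left hxm1 (by linarith)
      _ ≤ ((n - m:ℕ):ℝ) * x (m+1) := mul_le_mul_of_nonneg_right hnm hxm1pos.le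
      _ ≤ s n := by linarith
  -- finite part
  set G := (N:ℝ) * Real.log N * (Real.log (Real.log N))^(k-1) with hGdef
  have hNpos : (0:ℝ) < N := by linarith
  have hlogN : 1 < Real.log N := (Real.lt_log_iff_exp_lt hNpos).2 (by linarith)
  have hllN : 0 < Real.log (Real.log N) := Real.log_pos hlogN
  have hGpos : 0 < G := by
    have h1 := Real.rpow_pos_of_pos hllN (k-1)
    have h2 : (0:ℝ) < Real.log N := by linarith
    positivity
  have hcpos : 0 < (1/4) * (1/2:ℝ)^(k-1) / C₄ := by positivity
  refine ⟨min ((1/4) * (1/2:ℝ)^(k-1) / C₄) (2/G), lt_min hcpos (by positivity), ?_⟩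
  intro n hn3
  have hn3' : (3:ℝ) ≤ (n:ℝ) := by exact_mod_cast hn3
  have hnpos : (0:ℝ) < n := by linarith
  have hlogn : 1 < Real.log n := (Real.lt_log_iff_exp_lt hnpos).2 (by linarith)
  have hlognpos : (0:ℝ) < Real.log n := by linarith
  have hlln : 0 ≤ Real.log (Real.log n) := (Real.log_pos hlogn).le
  have hllk : 0 ≤ (Real.log (Real.log n))^(k-1) := Real.rpow_nonneg hlln _
  have hA : (0:ℝ) ≤ (n:ℝ) * Real.log n * (Real.log (Real.log n))^(k-1) :=
    mul_nonneg (mul_nonneg hnpos.le hlognpos.le) hllk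
  rcases le_or_gt N n with h | h
  · calc min ((1/4) * (1/2:ℝ)^(k-1) / C₄) (2/G) * n * Real.log n * (Real.log (Real.log n))^(k-1)
        = min ((1/4) * (1/2:ℝ)^(k-1) / C₄) (2/G) * ((n:ℝ) * Real.log n * (Real.log (Real.log n))^(k-1)) := by
          ring
      _ ≤ (1/4) * (1/2:ℝ)^(k-1) / C₄ * ((n:ℝ) * Real.log n * (Real.log (Real.log n))^(k-1)) :=
          mul_le_mul_of_nonneg_right (min_le_left _ _) hA
      _ = (1/4) * (1/2:ℝ)^(k-1) / C₄ * n * Real.log n * (Real.log (Real.log n))^(k-1) := by ring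
      _ ≤ s n := hmain n h
  · have hnN : (n:ℝ) ≤ (N:ℝ) := by exact_mod_cast h.le
    have hlogle : Real.log n ≤ Real.log N := Real.log_le_log hnpos hnN
    have hllle : Real.log (Real.log n) ≤ Real.log (Real.log N) :=
      Real.log_le_log hlognpos hlogle
    have hr : (Real.log (Real.log n))^(k-1) ≤ (Real.log (Real.log N))^(k-1) :=
      Real.rpow_le_rpow hlln hllle hk1
    have hgn : (n:ℝ) * Real.log n * (Real.log (Real.log n))^(k-1) ≤ G := by
      have h1 : (n:ℝ) * Real.log n ≤ (N:ℝ) * Real.log N :=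
        mul_le_mul hnN hlogle hlognpos.le hNpos.le
      exact mul_le_mul h1 hr hllk (mul_nonneg hNpos.le (by linarith))
    have hsn2 : (2:ℝ) ≤ s n := by linarith [hse n]
    calc min ((1/4) * (1/2:ℝ)^(k-1) / C₄) (2/G) * n * Real.log n * (Real.log (Real.log n))^(k-1)
        = min ((1/4) * (1/2:ℝ)^(k-1) / C₄) (2/G) * ((n:ℝ) * Real.log n * (Real.log (Real.log n))^(k-1)) := by
          ring
      _ ≤ (2/G) * ((n:ℝ) * Real.log n * (Real.log (Real.log n))^(k-1)) :=
          mul_le_mul_of_nonneg_right (min_le_right _ _) hA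
      _ ≤ (2/G) * G := mul_le_mul_of_nonneg_left hgn (by positivity)
      _ = 2 := by field_simp
      _ ≤ s n := hsn2
end
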